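/- The interleaving distance is a metric (not merely a pseudometric) on the set of isomorphism classes of cellular merge trees: it is real-valued, symmetric, satisfies the triangle inequality, and two cellular merge trees at interleaving distance zero are isomorphic as gauged spaces. -/

import Mathlib

open scoped Classical

noncomputable section

/-- Sublevel set of a function. -/
def sub {X : Type*} (f : X → ℝ) (t : ℝ) : Set X := {x | f x ≤ t}
/-- Combinatorial data for a cellular merge tree: a finite rooted tree with a real value at
each node, strictly increasing towards the root; the root carries an infinite upward ray. -/
structure MergeTreeData where
  n : ℕ
  parent : Fin n → Fin n
  root : Fin n
  hroot : parent root = root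
  hreach : ∀ v, ∃ k, parent^[k] v = root
  val : Fin n → ℝ
  hval : ∀ v, v ≠ root → val v < val (parent v)

namespace MergeTreeData

variable (d : MergeTreeData)

/-- Points of the edge attached below each node (for the root: the infinite upward ray). -/
def Carrier : Set (Fin d.n × ℝ) :=
  {p | d.val p.1 ≤ p.2 ∧ (p.1 ≠ d.root → p.2 ≤ d.val (d.parent p.1))}

/-- Glue the top of each edge to the bottom of the parent's edge. -/
def glueRel : ↥d.Carrier → ↥d.Carrier → Prop := fun a b =>
  a.1.2 = b.1.2 ∧ d.parent a.1.1 = b.1.1 ∧ a.1.2 = d.val (d.parent a.1.1)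

/-- The geometric realization of the cellular merge tree `d`. -/
def Space := Quot d.glueRel

instance : TopologicalSpace d.Space := instTopologicalSpaceQuot

/-- The gauge of the canonical cellular merge tree. -/
def gauge : d.Space → ℝ := Quot.lift (fun a => a.1.2) (fun _ _ h => h.1)

/-- `v` is a descendant of `w` (possibly `v = w`). -/
def Desc (v w : Fin d.n) : Prop := ∃ k, d.parent^[k] v = w

def IsLeafNode (v : Fin d.n) : Prop := ∀ w, d.parent w = v → w = v

def IsBranchNode (v : Fin d.n) : Prop := 2 ≤ Nat.card {w : Fin d.n // d.parent w = v ∧ w ≠ v}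

/-- Generic: binary (each node has zero or two children) and leaves take distinct values. -/
def Generic : Prop :=
  (∀ v, Nat.card {w : Fin d.n // d.parent w = v ∧ w ≠ v} = 0 ∨
        Nat.card {w : Fin d.n // d.parent w = v ∧ w ≠ v} = 2) ∧
  ∀ v w, d.IsLeafNode v → d.IsLeafNode w → v ≠ w → d.val v ≠ d.val w

/-- `a` is the least common ancestor of `u` and `w`. -/
def IsLCA (u w a : Fin d.n) : Prop :=
  d.Desc u a ∧ d.Desc w a ∧ ∀ b, d.Desc u b → d.Desc w b → d.Desc a b

/-- The type of leaves. -/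
def Leaf := {v : Fin d.n // d.IsLeafNode v}

end MergeTreeData

/-- Isomorphism of gauged spaces: a homeomorphism commuting with the gauges. -/
def GaugedIso {A B : Type*} [TopologicalSpace A] [TopologicalSpace B]
    (πA : A → ℝ) (πB : B → ℝ) : Prop :=
  ∃ e : A ≃ₜ B, ∀ x, πB (e x) = πA x

/-- A gauged space is a cellular merge tree if it is isomorphic (as a gauged space) to the
realization of some combinatorial merge tree data. -/
def IsCellularMergeTree {A : Type*} [TopologicalSpace A] (π : A → ℝ) : Prop :=
  ∃ d : MergeTreeData, GaugedIso d.gauge π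

/-- `σ` is the `ε`-shift map of the merge tree `(A,π)`: it raises the gauge by `ε` and sends
each point into its connected component in the sublevel set at its target height (which on a
merge tree characterizes the shift uniquely). -/
def ShiftMapProp {A : Type*} [TopologicalSpace A] (π : A → ℝ) (ε : ℝ) (σ : A → A) : Prop :=
  Continuous σ ∧ ∀ x, π (σ x) = π x + ε ∧ σ x ∈ connectedComponentIn (sub π (π x + ε)) x

/-- An `ε`-interleaving between two merge trees. -/
def Interleaved {A B : Type*} [TopologicalSpace A] [TopologicalSpace B]
    (πA : A → ℝ) (πB : B → ℝ) (ε : ℝ) : Prop :=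
  ∃ (α : A → B) (β : B → A) (σA : A → A) (σB : B → B),
    Continuous α ∧ Continuous β ∧
    ShiftMapProp πA (2 * ε) σA ∧ ShiftMapProp πB (2 * ε) σB ∧
    (∀ x, πB (α x) = πA x + ε) ∧ (∀ y, πA (β y) = πB y + ε) ∧
    β ∘ α = σA ∧ α ∘ β = σB

/-- The interleaving distance. -/
def dI {A B : Type*} [TopologicalSpace A] [TopologicalSpace B]
    (πA : A → ℝ) (πB : B → ℝ) : ℝ :=
  sInf {ε : ℝ | 0 ≤ ε ∧ Interleaved πA πB ε}

namespace MergeTreeData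

variable {d : MergeTreeData}

lemma desc_refl (v : Fin d.n) : d.Desc v v := ⟨0, rfl⟩

lemma desc_parent (v : Fin d.n) : d.Desc v (d.parent v) := ⟨1, rfl⟩

lemma desc_trans {v w u : Fin d.n} (h1 : d.Desc v w) (h2 : d.Desc w u) : d.Desc v u := by
  obtain ⟨k, rfl⟩ := h1; obtain ⟨l, rfl⟩ := h2
  exact ⟨l + k, (Function.iterate_add_apply _ l k v)⟩

lemma root_iterate (k : ℕ) : d.parent^[k] d.root = d.root := Function.iterate_fixed d.hroot k

lemma desc_root (v : Fin d.n) : d.Desc v d.root := d.hreach v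

lemma root_desc {w : Fin d.n} (h : d.Desc d.root w) : w = d.root := by
  obtain ⟨k, hk⟩ := h; rw [root_iterate] at hk; exact hk.symm

lemma val_parent_le (v : Fin d.n) : d.val v ≤ d.val (d.parent v) := by
  by_cases h : v = d.root
  · rw [h, d.hroot]
  · exact (d.hval v h).le

lemma val_le_iterate (k : ℕ) (v : Fin d.n) : d.val v ≤ d.val (d.parent^[k] v) := by
  induction k generalizing v with
  | zero => simp
  | succ k ih =>
    rw [Function.iterate_succ_apply]
    exact (val_parent_le v).trans (ih (d.parent v))

lemma desc_val_le {v w : Fin d.n} (h : d.Desc v w) : d.val v ≤ d.val w := by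
  obtain ⟨k, rfl⟩ := h; exact val_le_iterate k v

lemma desc_val_lt {v w : Fin d.n} (h : d.Desc v w) (hne : v ≠ w) : d.val v < d.val w := by
  obtain ⟨k, rfl⟩ := h
  cases k with
  | zero => exact absurd rfl hne
  | succ k =>
    by_cases hr : v = d.root
    · subst hr
      exact absurd (root_iterate (k + 1)) (Ne.symm hne)
    · rw [Function.iterate_succ_apply]
      exact lt_of_lt_of_le (d.hval v hr) (val_le_iterate k (d.parent v))

lemma desc_antisymm {v w : Fin d.n} (h1 : d.Desc v w) (h2 : d.Desc w v) : v = w := by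
  by_contra hne
  exact absurd (desc_val_lt h2 (Ne.symm hne)) (not_lt.2 (desc_val_lt h1 hne).le)

lemma desc_step {v w : Fin d.n} (h : d.Desc v w) (hne : v ≠ w) : d.Desc (d.parent v) w := by
  obtain ⟨k, hk⟩ := h
  cases k with
  | zero => exact absurd hk hne
  | succ k => exact ⟨k, by rw [← Function.iterate_succ_apply]; exact hk⟩

lemma desc_total {v a b : Fin d.n} (ha : d.Desc v a) (hb : d.Desc v b) :
    d.Desc a b ∨ d.Desc b a := by
  obtain ⟨k, hk⟩ := ha; obtain ⟨l, hl⟩ := hb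
  rcases le_total k l with h | h
  · exact Or.inl ⟨l - k, by rw [← hk, ← Function.iterate_add_apply, Nat.sub_add_cancel h, hl]⟩
  · exact Or.inr ⟨k - l, by rw [← hl, ← Function.iterate_add_apply, Nat.sub_add_cancel h, hk]⟩

lemma exists_isLCA (v w : Fin d.n) : ∃ a, d.IsLCA v w a := by
  classical
  have hne : (Finset.univ.filter (fun a => d.Desc v a ∧ d.Desc w a)).Nonempty :=
    ⟨d.root, by simp [desc_root]⟩
  obtain ⟨a, ha, hmin⟩ := Finset.exists_min_image _ d.val hne
  simp only [Finset.mem_filter, Finset.mem_univ, true_and] at ha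
  refine ⟨a, ha.1, ha.2, fun b hvb hwb => ?_⟩
  have hb : b ∈ Finset.univ.filter (fun a => d.Desc v a ∧ d.Desc w a) := by
    simp [hvb, hwb]
  have hle := hmin b hb
  rcases desc_total ha.1 hvb with h | h
  · exact h
  · rcases eq_or_ne b a with rfl | hne'
    · exact desc_refl _
    · exact absurd (desc_val_lt h hne') (not_lt.2 hle)

lemma isLCA_unique {v w a b : Fin d.n} (h1 : d.IsLCA v w a) (h2 : d.IsLCA v w b) : a = b :=
  desc_antisymm (h1.2.2 b h2.1 h2.2.1) (h2.2.2 a h1.1 h1.2.1)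

/-- least common ancestor -/
def lca (d : MergeTreeData) (v w : Fin d.n) : Fin d.n := (exists_isLCA v w).choose

lemma lca_isLCA (v w : Fin d.n) : d.IsLCA v w (lca d v w) := (exists_isLCA v w).choose_spec

lemma lca_eq {v w a : Fin d.n} (h : d.IsLCA v w a) : lca d v w = a :=
  isLCA_unique (lca_isLCA v w) h

lemma isLCA_symm {v w a : Fin d.n} (h : d.IsLCA v w a) : d.IsLCA w v a :=
  ⟨h.2.1, h.1, fun b h1 h2 => h.2.2 b h2 h1⟩

lemma lca_symm (v w : Fin d.n) : lca d v w = lca d w v := lca_eq (isLCA_symm (lca_isLCA w v))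

lemma lca_of_desc {v w : Fin d.n} (h : d.Desc v w) : lca d v w = w :=
  lca_eq ⟨h, desc_refl w, fun _ _ hw => hw⟩

lemma desc_val_le' {v w : Fin d.n} (h : d.Desc v w) (hne : v ≠ w) :
    d.val (d.parent v) ≤ d.val w := desc_val_le (desc_step h hne)

lemma reach_card (v : Fin d.n) : ∃ k ≤ d.n, d.parent^[k] v = d.root := by
  classical
  have hex := d.hreach v
  set k := Nat.find hex with hkdef
  have hk : d.parent^[k] v = d.root := Nat.find_spec hex
  refine ⟨k, ?_, hk⟩
  by_contra hlt
  push_neg at hlt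
  have key : ∀ i j : ℕ, i < j → j ≤ k → d.parent^[i] v = d.parent^[j] v → False := by
    intro i j hij hjk heq
    have hroot' : d.parent^[k - j + i] v = d.root := by
      have h1 : d.parent^[k] v = d.parent^[k - j] (d.parent^[j] v) := by
        rw [← Function.iterate_add_apply, Nat.sub_add_cancel hjk]
      have h2 : d.parent^[k - j] (d.parent^[i] v) = d.parent^[k - j + i] v := by
        rw [Function.iterate_add_apply]
      rw [h1, ← heq, h2] at hk
      exact hk
    exact Nat.find_min hex (m := k - j + i) (by omega) hroot'
  have hinj : Function.Injective (fun i : Fin (k + 1) => d.parent^[i.1] v) := by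
    intro i j hij
    simp only at hij
    rcases lt_trichotomy i.1 j.1 with h | h | h
    · exact absurd (key i.1 j.1 h (by omega) hij) not_false
    · exact Fin.ext h
    · exact absurd (key j.1 i.1 h (by omega) hij.symm) not_false
  have := Fintype.card_le_of_injective _ hinj
  simp at this
  omega

lemma reach_n (v : Fin d.n) : d.parent^[d.n] v = d.root := by
  obtain ⟨k, hk, hr⟩ := reach_card v
  have : d.parent^[d.n] v = d.parent^[d.n - k] (d.parent^[k] v) := by
    rw [← Function.iterate_add_apply, Nat.sub_add_cancel hk]
  rw [this, hr, root_iterate]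

end MergeTreeData
namespace MergeTreeData

variable {d : MergeTreeData}

/-- one-step glue-up normal form -/
def nf (a : ↥d.Carrier) : ↥d.Carrier :=
  if h : a.1.1 ≠ d.root ∧ a.1.2 = d.val (d.parent a.1.1) then
    ⟨(d.parent a.1.1, a.1.2), le_of_eq h.2.symm, fun hp => by
      rcases h with ⟨h1, h2⟩
      exact le_of_lt (h2 ▸ d.hval _ hp)⟩
  else a

lemma nf_height (a : ↥d.Carrier) : (nf a).1.2 = a.1.2 := by
  unfold nf; split <;> rfl

lemma nf_desc (a : ↥d.Carrier) : d.Desc a.1.1 (nf a).1.1 := by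
  unfold nf; split
  · exact desc_parent _
  · exact desc_refl _

lemma nf_glue {a b : ↥d.Carrier} (h : d.glueRel a b) : nf a = nf b := by
  obtain ⟨h1, h2, h3⟩ := h
  by_cases hr : a.1.1 = d.root
  · have hb : a.1 = b.1 := by
      have : d.parent a.1.1 = a.1.1 := by rw [hr, d.hroot]
      exact Prod.ext (by rw [← h2, this]) h1
    congr 1
    exact Subtype.ext hb
  · have hcond : a.1.1 ≠ d.root ∧ a.1.2 = d.val (d.parent a.1.1) := ⟨hr, h3⟩
    have hb1 : b.1 = (d.parent a.1.1, a.1.2) := Prod.ext h2.symm h1.symm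
    have hnfb : nf b = b := by
      apply dif_neg
      rintro ⟨hb2, hb3⟩
      by_cases hpr : d.parent a.1.1 = d.root
      · rw [hb1] at hb2; exact hb2 hpr
      · have hlt := d.hval (d.parent a.1.1) hpr
        rw [hb1] at hb3
        simp only at hb3
        exact absurd (h3.symm.trans hb3) (ne_of_lt hlt)
    rw [hnfb]
    unfold nf
    rw [dif_pos hcond]
    apply Subtype.ext
    exact hb1.symm

lemma nf_sound (a : ↥d.Carrier) : Quot.mk d.glueRel a = Quot.mk d.glueRel (nf a) := by
  unfold nf; split
  · next h => exact Quot.sound ⟨rfl, rfl, h.2⟩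
  · rfl

lemma quot_eq_iff {a b : ↥d.Carrier} :
    Quot.mk d.glueRel a = Quot.mk d.glueRel b ↔ nf a = nf b := by
  constructor
  · intro h
    have h2 := Quot.eq.1 h
    clear h
    induction h2 with
    | rel _ _ h => exact nf_glue h
    | refl => rfl
    | symm _ _ _ ih => exact ih.symm
    | trans _ _ _ _ _ ih1 ih2 => exact ih1.trans ih2
  · intro h
    rw [nf_sound a, nf_sound b, h]

lemma carrier_of_val {v w : Fin d.n} (h : d.Desc v w) :
    ((w, d.val w) : Fin d.n × ℝ) ∈ d.Carrier :=
  ⟨le_refl _, fun _ => val_parent_le w⟩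

/-- glue chain: a point at height `val w` with `w` an ancestor equals the node point of `w`. -/
lemma glue_chain {v w : Fin d.n} {s : ℝ} (hc : (v, s) ∈ d.Carrier) (hd : d.Desc v w)
    (hs : s = d.val w) :
    Quot.mk d.glueRel ⟨(v, s), hc⟩ = Quot.mk d.glueRel ⟨(w, d.val w), carrier_of_val hd⟩ := by
  subst hs
  rcases eq_or_ne v w with rfl | hne
  · exact congrArg _ (Subtype.ext rfl)
  · have hvr : v ≠ d.root := by
      rintro rfl
      exact hne (root_desc hd).symm
    have hpw : d.Desc (d.parent v) w := desc_step hd hne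
    have h1 : d.val w ≤ d.val (d.parent v) := hc.2 hvr
    have he : d.parent v = w := by
      by_contra hne'
      exact absurd (desc_val_lt hpw hne') (not_lt.2 h1)
    subst he
    exact Quot.sound ⟨rfl, rfl, rfl⟩

lemma gauge_mk (a : ↥d.Carrier) : d.gauge (Quot.mk d.glueRel a) = a.1.2 := rfl

/-- merge height of two carrier points -/
def mm (a b : ↥d.Carrier) : ℝ :=
  if d.Desc a.1.1 b.1.1 ∨ d.Desc b.1.1 a.1.1 then max a.1.2 b.1.2
  else d.val (lca d a.1.1 b.1.1)

lemma mm_mk {v w : Fin d.n} {t r : ℝ} (h1 : (v, t) ∈ d.Carrier) (h2 : (w, r) ∈ d.Carrier) :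
    mm (⟨(v, t), h1⟩ : ↥d.Carrier) ⟨(w, r), h2⟩ =
      if d.Desc v w ∨ d.Desc w v then max t r else d.val (lca d v w) := rfl

lemma mm_symm (a b : ↥d.Carrier) : mm a b = mm b a := by
  unfold mm
  by_cases h : d.Desc a.1.1 b.1.1 ∨ d.Desc b.1.1 a.1.1
  · rw [if_pos h, if_pos h.symm, max_comm]
  · rw [if_neg h, if_neg (fun hc => h hc.symm), lca_symm]

lemma mm_glue_left {a a' : ↥d.Carrier} (h : d.glueRel a a') (b : ↥d.Carrier) :
    mm a b = mm a' b := by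
  obtain ⟨⟨v, t⟩, hac⟩ := a
  obtain ⟨⟨v', t'⟩, hac'⟩ := a'
  obtain ⟨⟨w, r⟩, hbc⟩ := b
  obtain ⟨h1, h2, h3⟩ := h
  simp only at h1 h2 h3
  subst h1
  subst h2
  rw [mm_mk, mm_mk]
  by_cases hvr : v = d.root
  · rw [show d.parent v = v by rw [hvr, d.hroot]]
  · by_cases hwv : d.Desc w v
    · rw [if_pos (Or.inr hwv), if_pos (Or.inr (desc_trans hwv (desc_parent v)))]
    · by_cases hvw : d.Desc v w
      · have hne : v ≠ w := by rintro rfl; exact hwv hvw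
        rw [if_pos (Or.inl hvw), if_pos (Or.inl (desc_step hvw hne))]
      · -- incomparable
        have hwr : w ≠ d.root := by rintro rfl; exact hvw (desc_root v)
        have hincomp : ¬(d.Desc v w ∨ d.Desc w v) := by push_neg; exact ⟨hvw, hwv⟩
        by_cases hwp : d.Desc w (d.parent v)
        · -- lca v w = parent v
          have hwnep : w ≠ d.parent v := by rintro rfl; exact hvw (desc_parent v)
          have hlca : lca d v w = d.parent v := by
            apply lca_eq
            refine ⟨desc_parent v, hwp, fun b' hvb hwb => ?_⟩
            have hne2 : v ≠ b' := by rintro rfl; exact hwv hwb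
            exact desc_step hvb hne2
          have hr : r ≤ d.val (d.parent w) := hbc.2 hwr
          have hval' : d.val (d.parent w) ≤ d.val (d.parent v) :=
            desc_val_le (desc_step hwp hwnep)
          rw [if_neg hincomp, if_pos (Or.inr hwp), hlca, ← h3]
          rw [show (t ⊔ r) = t from max_eq_left ((hr.trans hval').trans (le_of_eq h3.symm))]
        · -- lca v w = lca (parent v) w
          have hpw : ¬d.Desc (d.parent v) w := fun hcon => hvw (desc_trans (desc_parent v) hcon)
          have hincomp' : ¬(d.Desc (d.parent v) w ∨ d.Desc w (d.parent v)) := by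
            push_neg; exact ⟨hpw, hwp⟩
          have hlca : lca d v w = lca d (d.parent v) w := by
            have hc := lca_isLCA (d := d) (d.parent v) w
            apply lca_eq
            refine ⟨desc_trans (desc_parent v) hc.1, hc.2.1, fun b' hvb hwb => ?_⟩
            have hne2 : v ≠ b' := by rintro rfl; exact hwv hwb
            exact hc.2.2 b' (desc_step hvb hne2) hwb
          rw [if_neg hincomp, if_neg hincomp', hlca]

/-- merge height on the realization -/
def mfun (d : MergeTreeData) : d.Space → d.Space → ℝ :=
  Quot.lift
    (fun a => Quot.lift (fun b => mm a b)
      (fun b b' h => by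
        show mm a b = mm a b'
        rw [mm_symm, mm_glue_left h, mm_symm]))
    (fun a a' h => by
      funext x
      induction x using Quot.ind with
      | _ b => exact mm_glue_left h b)

lemma mfun_mk (a b : ↥d.Carrier) :
    mfun d (Quot.mk d.glueRel a) (Quot.mk d.glueRel b) = mm a b := rfl

lemma mfun_symm (x y : d.Space) : mfun d x y = mfun d y x := by
  induction x using Quot.ind with | _ a =>
  induction y using Quot.ind with | _ b =>
  exact mm_symm a b

lemma mfun_self (x : d.Space) : mfun d x x = d.gauge x := by
  induction x using Quot.ind with | _ a =>
  rw [mfun_mk, gauge_mk]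
  unfold mm
  rw [if_pos (Or.inl (desc_refl _)), max_self]

lemma gauge_le_mm (a b : ↥d.Carrier) : a.1.2 ≤ mm a b := by
  unfold mm
  split
  · exact le_max_left _ _
  · next h =>
    push_neg at h
    have hvr : a.1.1 ≠ d.root := fun he => h.2 (he ▸ desc_root b.1.1)
    have hlca := lca_isLCA (d := d) a.1.1 b.1.1
    have hne : lca d a.1.1 b.1.1 ≠ a.1.1 := by
      intro he
      exact h.2 (he ▸ hlca.2.1)
    calc a.1.2 ≤ d.val (d.parent a.1.1) := a.2.2 hvr
      _ ≤ d.val (lca d a.1.1 b.1.1) := desc_val_le (desc_step hlca.1 (Ne.symm hne))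

lemma gauge_le_mfun_left (x y : d.Space) : d.gauge x ≤ mfun d x y := by
  induction x using Quot.ind with | _ a =>
  induction y using Quot.ind with | _ b =>
  exact gauge_le_mm a b

lemma gauge_le_mfun_right (x y : d.Space) : d.gauge y ≤ mfun d x y := by
  rw [mfun_symm]; exact gauge_le_mfun_left y x

end MergeTreeData
namespace MergeTreeData

variable {d : MergeTreeData}

/-- climb at most `k` edges from `v` towards the ancestor whose edge contains height `h` -/
def go (d : MergeTreeData) : ℕ → Fin d.n → ℝ → Fin d.n
  | 0, v, _ => v
  | k + 1, v, h => if v = d.root ∨ h ≤ d.val (d.parent v) then v else go d k (d.parent v) h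

lemma go_stop {v : Fin d.n} {h : ℝ} (hs : v = d.root ∨ h ≤ d.val (d.parent v)) (k : ℕ) :
    go d k v h = v := by
  cases k with
  | zero => rfl
  | succ k => exact if_pos hs

lemma go_root (k : ℕ) (h : ℝ) : go d k d.root h = d.root := go_stop (Or.inl rfl) k

lemma go_desc (k : ℕ) (v : Fin d.n) (h : ℝ) : d.Desc v (go d k v h) := by
  induction k generalizing v with
  | zero => exact desc_refl v
  | succ k ih =>
    rw [go]
    split
    · exact desc_refl v
    · exact desc_trans (desc_parent v) (ih (d.parent v))

lemma go_val_le (k : ℕ) {v : Fin d.n} {h : ℝ} (hv : d.val v ≤ h) :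
    d.val (go d k v h) ≤ h := by
  induction k generalizing v with
  | zero => exact hv
  | succ k ih =>
    rw [go]
    split
    · exact hv
    · next hns =>
      push_neg at hns
      exact ih hns.2.le

lemma go_top (k : ℕ) {v : Fin d.n} {h : ℝ} (hk : d.parent^[k] v = d.root) :
    go d k v h = d.root ∨ h ≤ d.val (d.parent (go d k v h)) := by
  induction k generalizing v with
  | zero => exact Or.inl hk
  | succ k ih =>
    rw [go]
    split
    · assumption
    · next hns =>
      rw [Function.iterate_succ_apply] at hk
      exact ih hk

lemma go_carrier {v : Fin d.n} {h : ℝ} (hv : d.val v ≤ h) :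
    ((go d d.n v h, h) : Fin d.n × ℝ) ∈ d.Carrier := by
  refine ⟨go_val_le d.n hv, fun hne => ?_⟩
  rcases go_top d.n (v := v) (h := h) (reach_n v) with h1 | h1
  · exact absurd h1 hne
  · exact h1

/-- the point of the tree at height `h` above `v` -/
def gop (d : MergeTreeData) (v : Fin d.n) (h : ℝ) (hv : d.val v ≤ h) : d.Space :=
  Quot.mk d.glueRel ⟨(go d d.n v h, h), go_carrier hv⟩

lemma gauge_gop (v : Fin d.n) (h : ℝ) (hv : d.val v ≤ h) : d.gauge (gop d v h hv) = h := rfl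

/-- main compatibility: climbing from `v` or from an ancestor `w` below height `h`
gives the same point -/
lemma go_congr_aux (k k' : ℕ) (v w : Fin d.n) (h : ℝ)
    (hk : d.parent^[k] v = d.root) (hk' : d.parent^[k'] w = d.root)
    (hd : d.Desc v w) (hw : d.val w ≤ h) (hcv : (go d k v h, h) ∈ d.Carrier)
    (hcw : (go d k' w h, h) ∈ d.Carrier) :
    Quot.mk d.glueRel ⟨(go d k v h, h), hcv⟩ = Quot.mk d.glueRel ⟨(go d k' w h, h), hcw⟩ := by
  induction k generalizing v w k' with
  | zero =>
    have hvr : v = d.root := hk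
    have hwr : w = d.root := root_desc (hvr ▸ hd)
    congr 1
    apply Subtype.ext
    show ((go d 0 v h, h) : Fin d.n × ℝ) = (go d k' w h, h)
    rw [show go d 0 v h = v from rfl, hwr, go_root, hvr]
  | succ k ih =>
    by_cases hstop : v = d.root ∨ h ≤ d.val (d.parent v)
    · have hgv : go d (k + 1) v h = v := go_stop hstop _
      rcases hstop with hvr | hle
      · have hwr : w = d.root := root_desc (hvr ▸ hd)
        congr 1
        apply Subtype.ext
        show ((go d (k+1) v h, h) : Fin d.n × ℝ) = (go d k' w h, h)
        rw [hgv, hwr, go_root, hvr]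
      · rcases eq_or_ne v w with rfl | hne
        · congr 1
          apply Subtype.ext
          show ((go d (k+1) v h, h) : Fin d.n × ℝ) = (go d k' v h, h)
          rw [hgv, go_stop (Or.inr hle)]
        · -- forced glue at the top of v's edge
          have hvr : v ≠ d.root := by
            rintro rfl
            exact hne (root_desc hd).symm
          have hpw : d.Desc (d.parent v) w := desc_step hd hne
          have h1 : d.val (d.parent v) ≤ d.val w := desc_val_le hpw
          have h2 : d.val w ≤ h := hw
          have h3 : h = d.val w := le_antisymm (hle.trans h1) h2
          have hgw : go d k' w h = w :=
            go_stop (Or.inr (h3.le.trans (val_parent_le w))) _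
          have hcv' : ((v, h) : Fin d.n × ℝ) ∈ d.Carrier := by rw [← hgv]; exact hcv
          have := glue_chain hcv' hd h3
          calc Quot.mk d.glueRel ⟨(go d (k+1) v h, h), hcv⟩
              = Quot.mk d.glueRel ⟨(v, h), hcv'⟩ := by
                congr 1
                apply Subtype.ext
                show ((go d (k+1) v h, h) : Fin d.n × ℝ) = (v, h)
                rw [hgv]
            _ = Quot.mk d.glueRel ⟨(w, d.val w), carrier_of_val hd⟩ := this
            _ = Quot.mk d.glueRel ⟨(go d k' w h, h), hcw⟩ := by
                congr 1
                apply Subtype.ext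
                show ((w, d.val w) : Fin d.n × ℝ) = (go d k' w h, h)
                rw [hgw, h3]
    · push_neg at hstop
      obtain ⟨hvr, hlt⟩ := hstop
      have hgv : go d (k + 1) v h = go d k (d.parent v) h := by
        rw [go, if_neg (by push_neg; exact ⟨hvr, hlt⟩)]
      have hkp : d.parent^[k] (d.parent v) = d.root := by
        rw [← Function.iterate_succ_apply]; exact hk
      have hcv2 : ((go d k (d.parent v) h, h) : Fin d.n × ℝ) ∈ d.Carrier := by
        rw [← hgv]; exact hcv
      have step1 : Quot.mk d.glueRel ⟨(go d (k+1) v h, h), hcv⟩ =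
          Quot.mk d.glueRel ⟨(go d k (d.parent v) h, h), hcv2⟩ := by
        congr 1
        apply Subtype.ext
        show ((go d (k+1) v h, h) : Fin d.n × ℝ) = (go d k (d.parent v) h, h)
        rw [hgv]
      rw [step1]
      rcases eq_or_ne v w with rfl | hne
      · -- w = v also recurses
        cases k' with
        | zero => exact absurd hk' hvr
        | succ k'' =>
          have hgw : go d (k'' + 1) v h = go d k'' (d.parent v) h := by
            rw [go, if_neg (by push_neg; exact ⟨hvr, hlt⟩)]
          have hcw2 : ((go d k'' (d.parent v) h, h) : Fin d.n × ℝ) ∈ d.Carrier := by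
            rw [← hgw]; exact hcw
          have hk'' : d.parent^[k''] (d.parent v) = d.root := by
            rw [← Function.iterate_succ_apply]; exact hk'
          have step2 : Quot.mk d.glueRel ⟨(go d (k''+1) v h, h), hcw⟩ =
              Quot.mk d.glueRel ⟨(go d k'' (d.parent v) h, h), hcw2⟩ := by
            congr 1
            apply Subtype.ext
            show ((go d (k''+1) v h, h) : Fin d.n × ℝ) = (go d k'' (d.parent v) h, h)
            rw [hgw]
          rw [step2]
          exact ih k'' (d.parent v) (d.parent v) hkp hk'' (desc_refl _) hlt.le hcv2 hcw2
      · exact ih k' (d.parent v) w hkp hk' (desc_step hd hne) hw hcv2 hcw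

lemma gop_congr {v w : Fin d.n} {h : ℝ} (hd : d.Desc v w) (hv : d.val v ≤ h)
    (hw : d.val w ≤ h) : gop d v h hv = gop d w h hw :=
  go_congr_aux d.n d.n v w h (reach_n v) (reach_n w) hd hw _ _

/-- lifting an equality of points to equality of climbed points -/
lemma gop_lift {a b : ↥d.Carrier} (hab : Quot.mk d.glueRel a = Quot.mk d.glueRel b)
    {h : ℝ} (ht : a.1.2 ≤ h) (ht' : b.1.2 ≤ h) :
    gop d a.1.1 h (a.2.1.trans ht) = gop d b.1.1 h (b.2.1.trans ht') := by
  have hnf := quot_eq_iff.1 hab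
  have h1 : gop d a.1.1 h (a.2.1.trans ht) =
      gop d (nf a).1.1 h ((nf a).2.1.trans (by rw [nf_height]; exact ht)) :=
    gop_congr (nf_desc a) _ _
  have h2 : gop d b.1.1 h (b.2.1.trans ht') =
      gop d (nf b).1.1 h ((nf b).2.1.trans (by rw [nf_height]; exact ht')) :=
    gop_congr (nf_desc b) _ _
  rw [h1, h2]
  congr 1
  rw [hnf]

lemma val_le_mm_left (a b : ↥d.Carrier) : d.val a.1.1 ≤ mm a b :=
  a.2.1.trans (gauge_le_mm a b)

lemma val_le_mm_right (a b : ↥d.Carrier) : d.val b.1.1 ≤ mm a b := by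
  rw [mm_symm]; exact val_le_mm_left b a

/-- the two climbs meet at the merge height -/
lemma gop_join (a b : ↥d.Carrier) :
    gop d a.1.1 (mm a b) (val_le_mm_left a b) = gop d b.1.1 (mm a b) (val_le_mm_right a b) := by
  by_cases hd1 : d.Desc a.1.1 b.1.1
  · exact gop_congr hd1 _ _
  · by_cases hd2 : d.Desc b.1.1 a.1.1
    · exact (gop_congr hd2 _ _).symm
    · have hincomp : ¬(d.Desc a.1.1 b.1.1 ∨ d.Desc b.1.1 a.1.1) := by
        push_neg; exact ⟨hd1, hd2⟩
      have hlca := lca_isLCA (d := d) a.1.1 b.1.1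
      have hm : mm a b = d.val (lca d a.1.1 b.1.1) := if_neg hincomp
      have e1 : gop d a.1.1 (mm a b) (val_le_mm_left a b) =
          gop d (lca d a.1.1 b.1.1) (mm a b) (le_of_eq hm.symm) := gop_congr hlca.1 _ _
      have e2 : gop d b.1.1 (mm a b) (val_le_mm_right a b) =
          gop d (lca d a.1.1 b.1.1) (mm a b) (le_of_eq hm.symm) := gop_congr hlca.2.1 _ _
      rw [e1, e2]

/-- conversely, if the climbs agree at height `h` then the merge height is at most `h` -/
lemma mm_le_of_gop_eq {a b : ↥d.Carrier} {h : ℝ} (ht : a.1.2 ≤ h) (ht' : b.1.2 ≤ h)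
    (heq : gop d a.1.1 h (a.2.1.trans ht) = gop d b.1.1 h (b.2.1.trans ht')) :
    mm a b ≤ h := by
  by_cases hcomp : d.Desc a.1.1 b.1.1 ∨ d.Desc b.1.1 a.1.1
  · rw [mm, if_pos hcomp]
    exact max_le ht ht'
  · rw [mm, if_neg hcomp]
    have hnf := quot_eq_iff.1 heq
    set pa : ↥d.Carrier := ⟨(go d d.n a.1.1 h, h), go_carrier (a.2.1.trans ht)⟩ with hpa
    set pb : ↥d.Carrier := ⟨(go d d.n b.1.1 h, h), go_carrier (b.2.1.trans ht')⟩ with hpb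
    have hu1 : d.Desc pa.1.1 (nf pa).1.1 := nf_desc pa
    have hu2 : d.Desc pb.1.1 (nf pb).1.1 := nf_desc pb
    have hvalu : d.val (nf pa).1.1 ≤ h := by
      have := (nf pa).2.1
      rw [nf_height] at this
      exact this
    have hda : d.Desc a.1.1 (nf pa).1.1 := desc_trans (go_desc d.n a.1.1 h) hu1
    have hdb : d.Desc b.1.1 (nf pa).1.1 := by
      rw [hnf]
      exact desc_trans (go_desc d.n b.1.1 h) hu2
    have := (lca_isLCA (d := d) a.1.1 b.1.1).2.2 _ hda hdb
    exact (desc_val_le this).trans hvalu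

lemma gop_eq_of_mm_le {a b : ↥d.Carrier} {h : ℝ} (ht : a.1.2 ≤ h) (ht' : b.1.2 ≤ h)
    (hm : mm a b ≤ h) :
    gop d a.1.1 h (a.2.1.trans ht) = gop d b.1.1 h (b.2.1.trans ht') := by
  have l1 := gop_lift (a := ⟨(go d d.n a.1.1 (mm a b), mm a b), go_carrier (val_le_mm_left a b)⟩)
    (b := ⟨(go d d.n b.1.1 (mm a b), mm a b), go_carrier (val_le_mm_right a b)⟩)
    (gop_join a b) (h := h) hm hm
  calc gop d a.1.1 h (a.2.1.trans ht)
      = gop d (go d d.n a.1.1 (mm a b)) h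
          ((go_val_le d.n (val_le_mm_left a b)).trans hm) :=
        gop_congr (go_desc d.n a.1.1 (mm a b)) _ _
    _ = gop d (go d d.n b.1.1 (mm a b)) h
          ((go_val_le d.n (val_le_mm_right a b)).trans hm) := l1
    _ = gop d b.1.1 h (b.2.1.trans ht') :=
        (gop_congr (go_desc d.n b.1.1 (mm a b)) _ _).symm

/-- ultrametric inequality for the merge height -/
lemma mfun_ultra (x y z : d.Space) :
    mfun d x z ≤ max (mfun d x y) (mfun d y z) := by
  induction x using Quot.ind with | _ a =>
  induction y using Quot.ind with | _ b =>
  induction z using Quot.ind with | _ c =>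
  rw [mfun_mk, mfun_mk, mfun_mk]
  set h := max (mm a b) (mm b c) with hh
  have hta : a.1.2 ≤ h := (gauge_le_mm a b).trans (le_max_left _ _)
  have htb : b.1.2 ≤ h := (gauge_le_mm b c).trans (le_max_right _ _)
  have htc : c.1.2 ≤ h := by
    have h1 := gauge_le_mm c b
    rw [mm_symm c b] at h1
    exact h1.trans (le_max_right _ _)
  apply mm_le_of_gop_eq hta htc
  calc gop d a.1.1 h (a.2.1.trans hta)
      = gop d b.1.1 h (b.2.1.trans htb) :=
        gop_eq_of_mm_le hta htb (le_max_left _ _)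
    _ = gop d c.1.1 h (c.2.1.trans htc) :=
        gop_eq_of_mm_le htb htc (le_max_right _ _)

end MergeTreeData
namespace MergeTreeData

variable {d : MergeTreeData}

lemma quot_eq_of_mm_le {a b : ↥d.Carrier} (hb : b.1.2 = a.1.2) (hm : mm a b ≤ a.1.2) :
    Quot.mk d.glueRel a = Quot.mk d.glueRel b := by
  have stopa : a.1.1 = d.root ∨ a.1.2 ≤ d.val (d.parent a.1.1) := by
    by_cases hr : a.1.1 = d.root
    · exact Or.inl hr
    · exact Or.inr (a.2.2 hr)
  have stopb : b.1.1 = d.root ∨ a.1.2 ≤ d.val (d.parent b.1.1) := by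
    by_cases hr : b.1.1 = d.root
    · exact Or.inl hr
    · exact Or.inr (hb ▸ b.2.2 hr)
  have e := gop_eq_of_mm_le (le_refl a.1.2) (le_of_eq hb) hm
  have ea : Quot.mk d.glueRel a = gop d a.1.1 a.1.2 (a.2.1.trans (le_refl _)) := by
    unfold gop
    congr 1
    apply Subtype.ext
    show a.1 = (go d d.n a.1.1 a.1.2, a.1.2)
    rw [go_stop stopa]
  have eb : Quot.mk d.glueRel b = gop d b.1.1 a.1.2 (b.2.1.trans (le_of_eq hb)) := by
    unfold gop
    congr 1
    apply Subtype.ext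
    show b.1 = (go d d.n b.1.1 a.1.2, a.1.2)
    rw [go_stop stopb, ← hb]
  rw [ea, eb, e]

/-- type copy carrying the path-metric topology -/
def Xm (d : MergeTreeData) := d.Space

def toXm (d : MergeTreeData) : d.Space → Xm d := id
def ofXm (d : MergeTreeData) : Xm d → d.Space := id

noncomputable instance : MetricSpace (Xm d) where
  dist x y := 2 * mfun d x y - d.gauge x - d.gauge y
  dist_self x := by
    show 2 * mfun d x x - d.gauge x - d.gauge x = 0
    exact (fun z : d.Space => (by rw [mfun_self]; ring : 2 * mfun d z z - d.gauge z - d.gauge z = 0)) x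
  dist_comm x y := by
    show 2 * mfun d x y - _ - _ = 2 * mfun d y x - _ - _
    exact (fun z w : d.Space => (by rw [mfun_symm]; ring :
      2 * mfun d z w - d.gauge z - d.gauge w = 2 * mfun d w z - d.gauge w - d.gauge z)) x y
  dist_triangle x y z := by
    show 2 * mfun d x z - d.gauge x - d.gauge z ≤
      (2 * mfun d x y - d.gauge x - d.gauge y) + (2 * mfun d y z - d.gauge y - d.gauge z)
    have h := mfun_ultra (d := d) x y z
    have h1 := gauge_le_mfun_left (d := d) x y
    have h2 := gauge_le_mfun_right (d := d) x y
    have h3 := gauge_le_mfun_left (d := d) y z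
    have h4 := gauge_le_mfun_right (d := d) y z
    rcases max_cases (mfun d x y) (mfun d y z) with ⟨he, _⟩ | ⟨he, _⟩ <;> rw [he] at h <;>
      linarith
  eq_of_dist_eq_zero := by
    intro x y h
    change 2 * mfun d x y - d.gauge x - d.gauge y = 0 at h
    have h1 := gauge_le_mfun_left (d := d) x y
    have h2 := gauge_le_mfun_right (d := d) x y
    have hxy : d.gauge x = d.gauge y := by linarith
    have hm : mfun d x y = d.gauge x := by linarith
    induction x using Quot.ind with | _ a =>
    induction y using Quot.ind with | _ b =>
    exact quot_eq_of_mm_le (by rw [← gauge_mk a, ← gauge_mk b, hxy]) (le_of_eq hm)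

lemma dist_eq (x y : Xm d) : dist x y = 2 * mfun d x y - d.gauge x - d.gauge y := rfl

lemma abs_gauge_sub_le (x y : Xm d) : |d.gauge x - d.gauge y| ≤ dist x y := by
  rw [dist_eq, abs_le]
  have h1 := gauge_le_mfun_left (d := d) x y
  have h2 := gauge_le_mfun_right (d := d) x y
  constructor <;> linarith

lemma continuous_gauge : Continuous d.gauge :=
  continuous_quot_lift _ (continuous_snd.comp continuous_subtype_val)

lemma continuous_mfun_right (z : d.Space) : Continuous (fun x : d.Space => mfun d x z) := by
  induction z using Quot.ind with | _ b =>
  have hco : ∀ a b' : ↥d.Carrier, d.glueRel a b' → mm a b = mm b' b :=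
    fun a b' h => mm_glue_left h b
  have key : Continuous (Quot.lift (fun a => mm a b) hco) := by
    apply continuous_quot_lift
    have hF : Continuous (fun p : Fin d.n × ℝ =>
        if d.Desc p.1 b.1.1 ∨ d.Desc b.1.1 p.1 then max p.2 b.1.2
        else d.val (lca d p.1 b.1.1)) := by
      rw [continuous_iff_continuousAt]
      intro p
      have hmem : {q : Fin d.n × ℝ | q.1 = p.1} ∈ nhds p := by
        refine IsOpen.mem_nhds ?_ rfl
        have : {q : Fin d.n × ℝ | q.1 = p.1} = {p.1} ×ˢ (Set.univ : Set ℝ) := by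
          ext q
          simp only [Set.mem_setOf_eq, Set.mem_prod, Set.mem_singleton_iff, Set.mem_univ,
            and_true]
        rw [this]
        exact (isOpen_discrete _).prod isOpen_univ
      by_cases hc : d.Desc p.1 b.1.1 ∨ d.Desc b.1.1 p.1
      · have heq : ∀ᶠ q in nhds p, max q.2 b.1.2 =
            (if d.Desc q.1 b.1.1 ∨ d.Desc b.1.1 q.1 then max q.2 b.1.2
              else d.val (lca d q.1 b.1.1)) := by
          filter_upwards [hmem] with q hq
          have hq' : q.1 = p.1 := hq
          rw [hq', if_pos hc]
        exact ((continuous_snd.max continuous_const).continuousAt).congr heq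
      · have heq : ∀ᶠ q in nhds p, d.val (lca d p.1 b.1.1) =
            (if d.Desc q.1 b.1.1 ∨ d.Desc b.1.1 q.1 then max q.2 b.1.2
              else d.val (lca d q.1 b.1.1)) := by
          filter_upwards [hmem] with q hq
          have hq' : q.1 = p.1 := hq
          rw [hq', if_neg hc]
        exact (continuousAt_const).congr heq
    exact hF.comp continuous_subtype_val
  have : (fun x : d.Space => mfun d x (Quot.mk d.glueRel b)) = Quot.lift (fun a => mm a b) hco := by
    funext x
    induction x using Quot.ind with | _ a =>
    rfl
  rw [this]
  exact key

lemma continuous_toXm : Continuous (toXm d) := by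
  rw [continuous_iff_continuousAt]
  intro x
  rw [ContinuousAt, Metric.tendsto_nhds]
  intro ε hε
  have hopen : IsOpen {y : d.Space | 2 * mfun d y x - d.gauge y - d.gauge x < ε} := by
    have hcont : Continuous (fun y : d.Space =>
        2 * mfun d y x - d.gauge y - d.gauge x) := by
      exact ((continuous_const.mul (continuous_mfun_right (d := d) x)).sub
        continuous_gauge).sub continuous_const
    exact isOpen_lt hcont continuous_const
  have hxmem : x ∈ {y : d.Space | 2 * mfun d y x - d.gauge y - d.gauge x < ε} := by
    simp only [Set.mem_setOf_eq, mfun_self]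
    linarith
  filter_upwards [hopen.mem_nhds hxmem] with y hy
  exact hy

/-- minimum node value -/
def minVal (d : MergeTreeData) : ℝ :=
  Finset.univ.inf' ⟨d.root, Finset.mem_univ _⟩ d.val

lemma minVal_le (v : Fin d.n) : d.minVal ≤ d.val v :=
  Finset.inf'_le _ (Finset.mem_univ v)

lemma minVal_le_gauge (x : d.Space) : d.minVal ≤ d.gauge x := by
  induction x using Quot.ind with | _ a =>
  exact (minVal_le a.1.1).trans a.2.1

lemma isClosed_carrier : IsClosed d.Carrier := by
  have h1 : IsClosed {p : Fin d.n × ℝ | d.val p.1 ≤ p.2} :=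
    isClosed_le ((continuous_of_discreteTopology (f := d.val)).comp continuous_fst) continuous_snd
  have h2 : IsClosed {p : Fin d.n × ℝ | p.1 ≠ d.root → p.2 ≤ d.val (d.parent p.1)} := by
    have : {p : Fin d.n × ℝ | p.1 ≠ d.root → p.2 ≤ d.val (d.parent p.1)} =
        ({d.root} ×ˢ (Set.univ : Set ℝ)) ∪
          {p : Fin d.n × ℝ | p.2 ≤ d.val (d.parent p.1)} := by
      ext ⟨p1, p2⟩
      by_cases hp : p1 = d.root
      · subst hp
        simp [Set.mem_prod]
      · simp only [Set.mem_setOf_eq, Set.mem_union, Set.mem_prod, Set.mem_singleton_iff,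
          Set.mem_univ, and_true]
        constructor
        · intro h; exact Or.inr (h hp)
        · rintro (h | h) h'
          · exact absurd h hp
          · exact h
    rw [this]
    exact ((isClosed_discrete _).prod isClosed_univ).union
      (isClosed_le continuous_snd
        ((continuous_of_discreteTopology (f := fun v => d.val (d.parent v))).comp continuous_fst))
  exact h1.inter h2

lemma isCompact_sub_quot (t : ℝ) : IsCompact (sub d.gauge t) := by
  have hK : IsCompact {p : Fin d.n × ℝ | p ∈ d.Carrier ∧ p.2 ≤ t} := by
    apply IsCompact.of_isClosed_subset
      ((isCompact_univ : IsCompact (Set.univ : Set (Fin d.n))).prod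
        (isCompact_Icc (a := d.minVal) (b := t)))
    · exact isClosed_carrier.inter (isClosed_le continuous_snd continuous_const)
    · rintro ⟨v, s⟩ ⟨hc, hs⟩
      exact ⟨Set.mem_univ _, (minVal_le v).trans hc.1, hs⟩
  have himg : Subtype.val '' {a : ↥d.Carrier | a.1.2 ≤ t} =
      {p : Fin d.n × ℝ | p ∈ d.Carrier ∧ p.2 ≤ t} := by
    ext p
    constructor
    · rintro ⟨a, ha, rfl⟩
      exact ⟨a.2, ha⟩
    · rintro ⟨hc, hs⟩
      exact ⟨⟨p, hc⟩, hs, rfl⟩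
  have hS : IsCompact {a : ↥d.Carrier | a.1.2 ≤ t} :=
    (Topology.IsEmbedding.subtypeVal).isCompact_iff.2 (by rw [himg]; exact hK)
  have hsub : sub d.gauge t = Quot.mk d.glueRel '' {a : ↥d.Carrier | a.1.2 ≤ t} := by
    ext x
    constructor
    · intro hx
      obtain ⟨a, rfl⟩ := Quot.exists_rep x
      exact ⟨a, hx, rfl⟩
    · rintro ⟨a, ha, rfl⟩
      exact ha
  rw [hsub]
  exact hS.image continuous_quot_mk

instance : T2Space d.Space :=
  T2Space.of_injective_continuous (f := toXm d) (fun _ _ h => h) continuous_toXm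

lemma isCompact_sub_xm (t : ℝ) : IsCompact (toXm d '' sub d.gauge t) :=
  (isCompact_sub_quot t).image continuous_toXm

instance : WeaklyLocallyCompactSpace (Xm d) := by
  refine ⟨fun x => ⟨toXm d '' sub d.gauge (d.gauge x + 1), isCompact_sub_xm _, ?_⟩⟩
  refine Filter.mem_of_superset (Metric.ball_mem_nhds x one_pos) ?_
  intro y hy
  rw [Metric.mem_ball] at hy
  refine ⟨ofXm d y, ?_, rfl⟩
  show d.gauge (ofXm d y) ≤ d.gauge x + 1
  have h1 := abs_gauge_sub_le y x
  have h2 := (le_abs_self (d.gauge y - d.gauge x)).trans h1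
  show d.gauge y ≤ d.gauge x + 1
  linarith

lemma continuous_gauge_xm : Continuous (fun y : Xm d => d.gauge y) := by
  rw [Metric.continuous_iff]
  intro b ε hε
  refine ⟨ε, hε, fun a hab => ?_⟩
  rw [Real.dist_eq]
  exact lt_of_le_of_lt (abs_gauge_sub_le a b) hab

lemma isProperMap_toXm : IsProperMap (toXm d) := by
  rw [isProperMap_iff_isCompact_preimage]
  refine ⟨continuous_toXm, fun K hK => ?_⟩
  rcases K.eq_empty_or_nonempty with rfl | hne
  · rw [Set.preimage_empty]; exact isCompact_empty
  · obtain ⟨z, _, hbound⟩ := hK.exists_isMaxOn hne continuous_gauge_xm.continuousOn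
    apply IsCompact.of_isClosed_subset (isCompact_sub_quot (d.gauge z))
    · exact hK.isClosed.preimage continuous_toXm
    · intro y hy
      exact hbound hy

/-- the identity is a homeomorphism between the quotient and metric topologies -/
def homeoXm (d : MergeTreeData) : d.Space ≃ₜ Xm d where
  toEquiv := ⟨toXm d, ofXm d, fun _ => rfl, fun _ => rfl⟩
  continuous_toFun := continuous_toXm
  continuous_invFun := by
    rw [continuous_iff_isClosed]
    intro s hs
    have himg := (isProperMap_toXm (d := d)).isClosedMap s hs
    have heq : ofXm d ⁻¹' s = toXm d '' s := by
      ext y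
      exact ⟨fun hy => ⟨y, hy, rfl⟩, by rintro ⟨z, hz, rfl⟩; exact hz⟩
    rw [heq]
    exact himg

lemma continuous_ofXm : Continuous (ofXm d) := (homeoXm d).continuous_invFun

end MergeTreeData
namespace MergeTreeData

variable {d : MergeTreeData}

lemma gop_height_congr {v : Fin d.n} {h1 h2 : ℝ} {p1 : d.val v ≤ h1} {p2 : d.val v ≤ h2}
    (e : h1 = h2) : gop d v h1 p1 = gop d v h2 p2 := by subst e; rfl

lemma gop_self (a : ↥d.Carrier) : gop d a.1.1 a.1.2 a.2.1 = Quot.mk d.glueRel a := by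
  have stopa : a.1.1 = d.root ∨ a.1.2 ≤ d.val (d.parent a.1.1) := by
    by_cases hr : a.1.1 = d.root
    · exact Or.inl hr
    · exact Or.inr (a.2.2 hr)
  unfold gop
  congr 1
  apply Subtype.ext
  show ((go d d.n a.1.1 a.1.2, a.1.2) : Fin d.n × ℝ) = a.1
  rw [go_stop stopa]

lemma mfun_gop {v : Fin d.n} {h h' : ℝ} (hv : d.val v ≤ h) (hv' : d.val v ≤ h') :
    mfun d (gop d v h hv) (gop d v h' hv') = max h h' := by
  have hcomp : d.Desc (go d d.n v h) (go d d.n v h') ∨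
      d.Desc (go d d.n v h') (go d d.n v h) :=
    desc_total (go_desc d.n v h) (go_desc d.n v h')
  show mm ⟨(go d d.n v h, h), go_carrier hv⟩ ⟨(go d d.n v h', h'), go_carrier hv'⟩ = max h h'
  rw [mm_mk, if_pos hcomp]

lemma dist_gop {v : Fin d.n} {h h' : ℝ} (hv : d.val v ≤ h) (hv' : d.val v ≤ h') :
    dist (toXm d (gop d v h hv)) (toXm d (gop d v h' hv')) = |h - h'| := by
  rw [dist_eq]
  show 2 * mfun d (gop d v h hv) (gop d v h' hv') - h - h' = |h - h'|
  rw [mfun_gop]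
  rcases le_total h h' with hle | hle
  · rw [max_eq_right hle, abs_of_nonpos (by linarith)]; ring
  · rw [max_eq_left hle, abs_of_nonneg (by linarith)]; ring

/-- the vertical path through a point -/
def pathFun (a : ↥d.Carrier) : ℝ → d.Space :=
  fun h => gop d a.1.1 (max h a.1.2) (a.2.1.trans (le_max_right _ _))

lemma continuous_pathFun (a : ↥d.Carrier) : Continuous (fun h => toXm d (pathFun a h)) := by
  rw [Metric.continuous_iff]
  intro b ε hε
  refine ⟨ε, hε, fun x hx => ?_⟩
  have key : dist (toXm d (pathFun a x)) (toXm d (pathFun a b)) =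
      |max x a.1.2 - max b a.1.2| := dist_gop _ _
  rw [key]
  calc |max x a.1.2 - max b a.1.2| ≤ |x - b| := abs_max_sub_max_le_abs _ _ _
    _ < ε := by rwa [Real.dist_eq] at hx
  
lemma gauge_pathFun (a : ↥d.Carrier) (h : ℝ) : d.gauge (pathFun a h) = max h a.1.2 := rfl

lemma pathFun_bot (a : ↥d.Carrier) : pathFun a a.1.2 = Quot.mk d.glueRel a := by
  unfold pathFun
  rw [gop_height_congr (max_self a.1.2)]
  exact gop_self a

lemma exists_path (x y : d.Space) :
    ∃ C : Set d.Space, IsPreconnected C ∧ x ∈ C ∧ y ∈ C ∧ C ⊆ sub d.gauge (mfun d x y) := by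
  induction x using Quot.ind with | _ a =>
  induction y using Quot.ind with | _ b =>
  set m := mm a b with hm
  have hma : a.1.2 ≤ m := gauge_le_mm a b
  have hmb : b.1.2 ≤ m := by
    have := gauge_le_mm b a
    rwa [mm_symm b a] at this
  have hcont : ∀ c : ↥d.Carrier, ContinuousOn (pathFun c) (Set.Icc c.1.2 m) := by
    intro c
    exact (continuous_ofXm.comp (continuous_pathFun c)).continuousOn
  have hjoin : pathFun a m = pathFun b m := by
    unfold pathFun
    rw [gop_height_congr (max_eq_left hma), gop_height_congr (max_eq_left hmb)]
    exact gop_join a b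
  refine ⟨pathFun a '' Set.Icc a.1.2 m ∪ pathFun b '' Set.Icc b.1.2 m, ?_, ?_, ?_, ?_⟩
  · apply IsPreconnected.union (pathFun a m)
    · exact ⟨m, ⟨hma, le_rfl⟩, rfl⟩
    · exact ⟨m, ⟨hmb, le_rfl⟩, hjoin.symm⟩
    · exact isPreconnected_Icc.image _ (hcont a)
    · exact isPreconnected_Icc.image _ (hcont b)
  · exact Or.inl ⟨a.1.2, ⟨le_rfl, hma⟩, pathFun_bot a⟩
  · exact Or.inr ⟨b.1.2, ⟨le_rfl, hmb⟩, pathFun_bot b⟩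
  · rintro z (⟨h, ⟨h1, h2⟩, rfl⟩ | ⟨h, ⟨h1, h2⟩, rfl⟩) <;>
    · show d.gauge _ ≤ mfun d (Quot.mk d.glueRel a) (Quot.mk d.glueRel b)
      rw [gauge_pathFun, mfun_mk, ← hm, max_eq_left h1]
      exact h2

/-- positive gap above `t` in the (finite) set of node values -/
lemma exists_gap (t : ℝ) : ∃ δ > 0, ∀ u : Fin d.n, t < d.val u → t + δ ≤ d.val u := by
  classical
  by_cases hne : ((Finset.univ.image d.val).filter (fun s => t < s)).Nonempty
  · refine ⟨Finset.min' _ hne - t, ?_, fun u hu => ?_⟩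
    · have hmem := Finset.min'_mem _ hne
      have := (Finset.mem_filter.1 hmem).2
      linarith
    · have hmem : d.val u ∈ (Finset.univ.image d.val).filter (fun s => t < s) :=
        Finset.mem_filter.2 ⟨Finset.mem_image_of_mem _ (Finset.mem_univ u), hu⟩
      have := Finset.min'_le _ _ hmem
      linarith
  · refine ⟨1, one_pos, fun u hu => ?_⟩
    exact (hne ⟨d.val u,
      Finset.mem_filter.2 ⟨Finset.mem_image_of_mem _ (Finset.mem_univ u), hu⟩⟩).elim

/-- points below level `t` in different components at level `t` are uniformly far apart -/
lemma dist_ge_of_mfun_gt {t δ : ℝ} (hδ : ∀ u : Fin d.n, t < d.val u → t + δ ≤ d.val u)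
    {x y : d.Space} (hx : d.gauge x ≤ t) (hy : d.gauge y ≤ t) (hm : t < mfun d x y) :
    2 * δ ≤ dist (toXm d x) (toXm d y) := by
  induction x using Quot.ind with | _ a =>
  induction y using Quot.ind with | _ b =>
  rw [mfun_mk] at hm
  have hval : t + δ ≤ mm a b := by
    rw [mm] at hm ⊢
    split at hm
    · next hc =>
      rw [if_pos hc]
      exact absurd hm (not_lt.2 (max_le hx hy))
    · next hc =>
      rw [if_neg hc]
      exact hδ _ hm
  rw [dist_eq]
  show 2 * δ ≤ 2 * mfun d (Quot.mk d.glueRel a) (Quot.mk d.glueRel b) - a.1.2 - b.1.2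
  rw [mfun_mk]
  have hga : a.1.2 ≤ t := hx
  have hgb : b.1.2 ≤ t := hy
  linarith

/-- merge heights are bounded on connected subsets of sublevel sets -/
lemma mfun_le_of_connected {t : ℝ} {C : Set d.Space} (hC : IsPreconnected C)
    (hsub : C ⊆ sub d.gauge t) {x y : d.Space} (hx : x ∈ C) (hy : y ∈ C) :
    mfun d x y ≤ t := by
  obtain ⟨δ, hδpos, hδ⟩ := exists_gap (d := d) t
  by_contra hgt
  push_neg at hgt
  set U : Set d.Space :=
    ⋃ z ∈ {z ∈ C | mfun d x z ≤ t}, toXm d ⁻¹' Metric.ball (toXm d z) δ with hU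
  set V : Set d.Space :=
    ⋃ z ∈ {z ∈ C | t < mfun d x z}, toXm d ⁻¹' Metric.ball (toXm d z) δ with hV
  have hUopen : IsOpen U :=
    isOpen_biUnion fun z _ => Metric.isOpen_ball.preimage continuous_toXm
  have hVopen : IsOpen V :=
    isOpen_biUnion fun z _ => Metric.isOpen_ball.preimage continuous_toXm
  have hcover : C ⊆ U ∪ V := by
    intro z hz
    rcases le_or_gt (mfun d x z) t with h | h
    · exact Or.inl (Set.mem_biUnion ⟨hz, h⟩ (by simp [Metric.mem_ball, hδpos]))
    · exact Or.inr (Set.mem_biUnion ⟨hz, h⟩ (by simp [Metric.mem_ball, hδpos]))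
  have hxU : x ∈ C ∩ U := by
    refine ⟨hx, Set.mem_biUnion ⟨hx, ?_⟩ (by simp [Metric.mem_ball, hδpos])⟩
    rw [mfun_self]
    exact hsub hx
  have hyV : y ∈ C ∩ V :=
    ⟨hy, Set.mem_biUnion ⟨hy, hgt⟩ (by simp [Metric.mem_ball, hδpos])⟩
  obtain ⟨z, hzC, hzU, hzV⟩ := hC U V hUopen hVopen hcover ⟨x, hxU⟩ ⟨y, hyV⟩
  obtain ⟨z1, hz1, hdz1⟩ := Set.mem_iUnion₂.1 hzU
  obtain ⟨z2, hz2, hdz2⟩ := Set.mem_iUnion₂.1 hzV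
  rw [Set.mem_preimage, Metric.mem_ball] at hdz1 hdz2
  have hz12 : t < mfun d z1 z2 := by
    have hult := mfun_ultra (d := d) x z1 z2
    rcases max_cases (mfun d x z1) (mfun d z1 z2) with ⟨he, _⟩ | ⟨he, _⟩ <;> rw [he] at hult
    · exact absurd (lt_of_lt_of_le hz2.2 (hult.trans hz1.2)) (lt_irrefl t)
    · exact lt_of_lt_of_le hz2.2 hult
  have hfar := dist_ge_of_mfun_gt hδ (hsub hz1.1) (hsub hz2.1) hz12
  have : dist (toXm d z1) (toXm d z2) < 2 * δ := by
    calc dist (toXm d z1) (toXm d z2) ≤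
        dist (toXm d z1) (toXm d z) + dist (toXm d z) (toXm d z2) := dist_triangle _ _ _
      _ < δ + δ := by
          rw [dist_comm (toXm d z1)]
          exact add_lt_add hdz1 hdz2
      _ = 2 * δ := by ring
  linarith

lemma mem_comp_of_mfun_le {t : ℝ} {x y : d.Space} (hx : d.gauge x ≤ t) (hy : d.gauge y ≤ t)
    (hm : mfun d x y ≤ t) : y ∈ connectedComponentIn (sub d.gauge t) x := by
  obtain ⟨C, hC, hxC, hyC, hCsub⟩ := exists_path x y
  have hCsub' : C ⊆ sub d.gauge t := fun z hz => le_trans (hCsub hz) hm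
  exact (hC.subset_connectedComponentIn hxC hCsub') hyC

lemma mfun_le_of_mem_comp {t : ℝ} {x y : d.Space}
    (hy : y ∈ connectedComponentIn (sub d.gauge t) x) : mfun d x y ≤ t := by
  have hxs : x ∈ sub d.gauge t := by
    by_contra hxs
    rw [connectedComponentIn, dif_neg hxs] at hy
    exact hy
  exact mfun_le_of_connected isPreconnected_connectedComponentIn
    (connectedComponentIn_subset _ _) (mem_connectedComponentIn hxs) hy

end MergeTreeData
namespace MergeTreeData

variable {d : MergeTreeData}

lemma shift_mfun_le {ε : ℝ} {σ : d.Space → d.Space} (hσ : ShiftMapProp d.gauge ε σ)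
    (x : d.Space) : mfun d x (σ x) ≤ d.gauge x + ε :=
  mfun_le_of_mem_comp (hσ.2 x).2

lemma shift_dist_le {ε : ℝ} {σ : d.Space → d.Space} (hσ : ShiftMapProp d.gauge ε σ)
    (x : d.Space) : dist (toXm d (σ x)) (toXm d x) ≤ ε := by
  have h1 := shift_mfun_le hσ x
  have h2 := (hσ.2 x).1
  rw [dist_eq]
  show 2 * mfun d (σ x) x - d.gauge (σ x) - d.gauge x ≤ ε
  rw [mfun_symm, h2]
  linarith

lemma shift_mfun_mono {ε : ℝ} {σ : d.Space → d.Space} (hσ : ShiftMapProp d.gauge ε σ)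
    (x y : d.Space) : mfun d x y ≤ mfun d (σ x) (σ y) := by
  have hA : mfun d x (σ x) ≤ mfun d (σ x) (σ y) :=
    (shift_mfun_le hσ x).trans (by rw [← (hσ.2 x).1]; exact gauge_le_mfun_left _ _)
  have hD : mfun d (σ y) y ≤ mfun d (σ x) (σ y) := by
    rw [mfun_symm]
    exact (shift_mfun_le hσ y).trans (by rw [← (hσ.2 y).1]; exact gauge_le_mfun_right _ _)
  have h2 : mfun d (σ x) y ≤ max (mfun d (σ x) (σ y)) (mfun d (σ y) y) := mfun_ultra _ _ _
  exact (mfun_ultra x (σ x) y).trans (max_le hA (h2.trans (max_le le_rfl hD)))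

end MergeTreeData

open MergeTreeData

lemma map_mfun_le {d1 d2 : MergeTreeData} {ε : ℝ} {α : d1.Space → d2.Space}
    (hc : Continuous α) (hg : ∀ x, d2.gauge (α x) = d1.gauge x + ε) (x y : d1.Space) :
    mfun d2 (α x) (α y) ≤ mfun d1 x y + ε := by
  obtain ⟨C, hC, hxC, hyC, hCsub⟩ := exists_path x y
  have himg : IsPreconnected (α '' C) := hC.image α hc.continuousOn
  have hsub : α '' C ⊆ sub d2.gauge (mfun d1 x y + ε) := by
    rintro _ ⟨z, hz, rfl⟩
    show d2.gauge (α z) ≤ mfun d1 x y + ε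
    rw [hg z]
    exact add_le_add (hCsub hz) le_rfl
  exact mfun_le_of_connected himg hsub ⟨x, hxC, rfl⟩ ⟨y, hyC, rfl⟩

/-- quantitative consequences of an interleaving between canonical merge trees -/
lemma interleaving_est {d1 d2 : MergeTreeData} {ε : ℝ}
    (hI : Interleaved d1.gauge d2.gauge ε) :
    ∃ (α : d1.Space → d2.Space) (β : d2.Space → d1.Space),
      (∀ x, d2.gauge (α x) = d1.gauge x + ε) ∧
      (∀ y, d1.gauge (β y) = d2.gauge y + ε) ∧
      (∀ x y, dist (toXm d2 (α x)) (toXm d2 (α y)) ≤ dist (toXm d1 x) (toXm d1 y)) ∧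
      (∀ x y, dist (toXm d1 (β x)) (toXm d1 (β y)) ≤ dist (toXm d2 x) (toXm d2 y)) ∧
      (∀ x, dist (toXm d1 (β (α x))) (toXm d1 x) ≤ 2 * ε) ∧
      (∀ y, dist (toXm d2 (α (β y))) (toXm d2 y) ≤ 2 * ε) := by
  obtain ⟨α, β, σ1, σ2, hαc, hβc, hσ1, hσ2, hαg, hβg, hβα, hαβ⟩ := hI
  have hβα' : ∀ x, β (α x) = σ1 x := fun x => congrFun hβα x
  have hαβ' : ∀ y, α (β y) = σ2 y := fun y => congrFun hαβ y
  have hup1 : ∀ x y, mfun d2 (α x) (α y) ≤ mfun d1 x y + ε := map_mfun_le hαc hαg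
  have hup2 : ∀ x y, mfun d1 (β x) (β y) ≤ mfun d2 x y + ε := map_mfun_le hβc hβg
  have hlow1 : ∀ x y, mfun d1 x y ≤ mfun d2 (α x) (α y) + ε := by
    intro x y
    have h1 := shift_mfun_mono hσ1 x y
    have h2 := hup2 (α x) (α y)
    rw [hβα' x, hβα' y] at h2
    linarith
  have hlow2 : ∀ x y, mfun d2 x y ≤ mfun d1 (β x) (β y) + ε := by
    intro x y
    have h1 := shift_mfun_mono hσ2 x y
    have h2 := hup1 (β x) (β y)
    rw [hαβ' x, hαβ' y] at h2
    linarith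
  refine ⟨α, β, hαg, hβg, ?_, ?_, ?_, ?_⟩
  · intro x y
    rw [dist_eq, dist_eq]
    show 2 * mfun d2 (α x) (α y) - d2.gauge (α x) - d2.gauge (α y) ≤
      2 * mfun d1 x y - d1.gauge x - d1.gauge y
    rw [hαg x, hαg y]
    have := hup1 x y
    linarith
  · intro x y
    rw [dist_eq, dist_eq]
    show 2 * mfun d1 (β x) (β y) - d1.gauge (β x) - d1.gauge (β y) ≤
      2 * mfun d2 x y - d2.gauge x - d2.gauge y
    rw [hβg x, hβg y]
    have := hup2 x y
    linarith
  · intro x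
    rw [hβα' x]
    exact shift_dist_le hσ1 x
  · intro y
    rw [hαβ' y]
    exact shift_dist_le hσ2 y

/-- a sequence of interleavings with vanishing ε yields a gauged isomorphism -/
lemma gaugedIso_of_seq (d1 d2 : MergeTreeData) (ε : ℕ → ℝ)
    (hε0 : ∀ n, 0 ≤ ε n) (hεlt : ∀ n, ε n < 1 / (n + 1))
    (hI : ∀ n, Interleaved d1.gauge d2.gauge (ε n)) :
    GaugedIso d1.gauge d2.gauge := by
  have hest := fun n => interleaving_est (hI n)
  choose α β hαg hβg hαl hβl hβα hαβ using hest
  obtain ⟨U, hU⟩ := Filter.exists_ultrafilter_le (Filter.atTop : Filter ℕ)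
  have hεtend : Filter.Tendsto ε Filter.atTop (nhds 0) :=
    squeeze_zero hε0 (fun n => (hεlt n).le) tendsto_one_div_add_atTop_nhds_zero_nat
  have hεU : Filter.Tendsto ε (↑U) (nhds 0) := hεtend.mono_left hU
  -- pointwise ultrafilter limits
  have hex : ∀ x : Xm d1, ∃ y : Xm d2,
      Filter.Tendsto (fun n => toXm d2 (α n (ofXm d1 x))) (↑U) (nhds y) := by
    intro x
    have hmem : ∀ n, toXm d2 (α n (ofXm d1 x)) ∈ toXm d2 '' sub d2.gauge (d1.gauge x + 1) := by
      intro n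
      refine ⟨α n (ofXm d1 x), ?_, rfl⟩
      show d2.gauge (α n (ofXm d1 x)) ≤ d1.gauge x + 1
      rw [hαg n]
      have h1 : ε n < 1 := lt_of_lt_of_le (hεlt n) (by
        rw [div_le_one (by positivity)]
        simp)
      have : d1.gauge (ofXm d1 x) = d1.gauge x := rfl
      linarith [this.le]
    obtain ⟨y, _, hy⟩ := (isCompact_sub_xm (d := d2) (d1.gauge x + 1)).ultrafilter_le_nhds
      (U.map fun n => toXm d2 (α n (ofXm d1 x)))
      (by
        rw [Ultrafilter.coe_map, Filter.le_principal_iff, Filter.mem_map]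
        exact Filter.univ_mem' hmem)
    refine ⟨y, ?_⟩
    rwa [Filter.Tendsto, ← Ultrafilter.coe_map]
  have hex' : ∀ y : Xm d2, ∃ x : Xm d1,
      Filter.Tendsto (fun n => toXm d1 (β n (ofXm d2 y))) (↑U) (nhds x) := by
    intro y
    have hmem : ∀ n, toXm d1 (β n (ofXm d2 y)) ∈ toXm d1 '' sub d1.gauge (d2.gauge y + 1) := by
      intro n
      refine ⟨β n (ofXm d2 y), ?_, rfl⟩
      show d1.gauge (β n (ofXm d2 y)) ≤ d2.gauge y + 1
      rw [hβg n]
      have h1 : ε n < 1 := lt_of_lt_of_le (hεlt n) (by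
        rw [div_le_one (by positivity)]
        simp)
      have : d2.gauge (ofXm d2 y) = d2.gauge y := rfl
      linarith [this.le]
    obtain ⟨x, _, hx⟩ := (isCompact_sub_xm (d := d1) (d2.gauge y + 1)).ultrafilter_le_nhds
      (U.map fun n => toXm d1 (β n (ofXm d2 y)))
      (by
        rw [Ultrafilter.coe_map, Filter.le_principal_iff, Filter.mem_map]
        exact Filter.univ_mem' hmem)
    refine ⟨x, ?_⟩
    rwa [Filter.Tendsto, ← Ultrafilter.coe_map]
  choose F hF using hex
  choose G hG using hex'
  -- gauges
  have hFg : ∀ x, d2.gauge (F x) = d1.gauge x := by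
    intro x
    have h1 : Filter.Tendsto (fun n => d2.gauge (toXm d2 (α n (ofXm d1 x)))) (↑U)
        (nhds (d2.gauge (F x))) := (continuous_gauge_xm.tendsto _).comp (hF x)
    have h2 : Filter.Tendsto (fun n => d2.gauge (toXm d2 (α n (ofXm d1 x)))) (↑U)
        (nhds (d1.gauge x + 0)) := by
      have : (fun n => d2.gauge (toXm d2 (α n (ofXm d1 x)))) =
          fun n => d1.gauge x + ε n := by
        funext n
        exact hαg n (ofXm d1 x)
      rw [this]
      exact Filter.Tendsto.add tendsto_const_nhds hεU
    have := tendsto_nhds_unique h1 h2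
    rw [add_zero] at this
    exact this
  have hGg : ∀ y, d1.gauge (G y) = d2.gauge y := by
    intro y
    have h1 : Filter.Tendsto (fun n => d1.gauge (toXm d1 (β n (ofXm d2 y)))) (↑U)
        (nhds (d1.gauge (G y))) := (continuous_gauge_xm.tendsto _).comp (hG y)
    have h2 : Filter.Tendsto (fun n => d1.gauge (toXm d1 (β n (ofXm d2 y)))) (↑U)
        (nhds (d2.gauge y + 0)) := by
      have : (fun n => d1.gauge (toXm d1 (β n (ofXm d2 y)))) =
          fun n => d2.gauge y + ε n := by
        funext n
        exact hβg n (ofXm d2 y)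
      rw [this]
      exact Filter.Tendsto.add tendsto_const_nhds hεU
    have := tendsto_nhds_unique h1 h2
    rw [add_zero] at this
    exact this
  -- Lipschitz
  have hFl : ∀ x y, dist (F x) (F y) ≤ dist x y := by
    intro x y
    have h1 : Filter.Tendsto
        (fun n => dist (toXm d2 (α n (ofXm d1 x))) (toXm d2 (α n (ofXm d1 y)))) (↑U)
        (nhds (dist (F x) (F y))) := (hF x).dist (hF y)
    exact le_of_tendsto h1 (Filter.Eventually.of_forall fun n => hαl n _ _)
  have hGl : ∀ x y, dist (G x) (G y) ≤ dist x y := by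
    intro x y
    have h1 : Filter.Tendsto
        (fun n => dist (toXm d1 (β n (ofXm d2 x))) (toXm d1 (β n (ofXm d2 y)))) (↑U)
        (nhds (dist (G x) (G y))) := (hG x).dist (hG y)
    exact le_of_tendsto h1 (Filter.Eventually.of_forall fun n => hβl n _ _)
  -- inverses
  have hGF : ∀ x, G (F x) = x := by
    intro x
    have key : Filter.Tendsto (fun n => dist (toXm d1 (β n (ofXm d2 (F x)))) x) (↑U)
        (nhds (dist (G (F x)) x)) := (hG (F x)).dist tendsto_const_nhds
    have hbound : ∀ n, dist (toXm d1 (β n (ofXm d2 (F x)))) x ≤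
        dist (toXm d2 (α n (ofXm d1 x))) (F x) + 2 * ε n := by
      intro n
      calc dist (toXm d1 (β n (ofXm d2 (F x)))) x
          ≤ dist (toXm d1 (β n (ofXm d2 (F x))))
              (toXm d1 (β n (α n (ofXm d1 x)))) +
            dist (toXm d1 (β n (α n (ofXm d1 x)))) x := dist_triangle _ _ _
        _ ≤ dist (toXm d2 (α n (ofXm d1 x))) (F x) + 2 * ε n := by
            apply add_le_add
            · rw [dist_comm]
              exact hβl n (α n (ofXm d1 x)) (ofXm d2 (F x))
            · exact hβα n (ofXm d1 x)
    have hlim0 : Filter.Tendsto (fun n => dist (toXm d1 (β n (ofXm d2 (F x)))) x) (↑U)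
        (nhds 0) := by
      apply squeeze_zero (fun n => dist_nonneg) hbound
      have h1 : Filter.Tendsto (fun n => dist (toXm d2 (α n (ofXm d1 x))) (F x)) (↑U)
          (nhds 0) := by
        have := (hF x).dist (tendsto_const_nhds (x := F x) (f := (↑U : Filter ℕ)))
        rwa [dist_self] at this
      have := h1.add (hεU.const_mul 2)
      rwa [mul_zero, add_zero] at this
    exact dist_eq_zero.1 (tendsto_nhds_unique key hlim0)
  have hFG : ∀ y, F (G y) = y := by
    intro y
    have key : Filter.Tendsto (fun n => dist (toXm d2 (α n (ofXm d1 (G y)))) y) (↑U)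
        (nhds (dist (F (G y)) y)) := (hF (G y)).dist tendsto_const_nhds
    have hbound : ∀ n, dist (toXm d2 (α n (ofXm d1 (G y)))) y ≤
        dist (toXm d1 (β n (ofXm d2 y))) (G y) + 2 * ε n := by
      intro n
      calc dist (toXm d2 (α n (ofXm d1 (G y)))) y
          ≤ dist (toXm d2 (α n (ofXm d1 (G y))))
              (toXm d2 (α n (β n (ofXm d2 y)))) +
            dist (toXm d2 (α n (β n (ofXm d2 y)))) y := dist_triangle _ _ _
        _ ≤ dist (toXm d1 (β n (ofXm d2 y))) (G y) + 2 * ε n := by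
            apply add_le_add
            · rw [dist_comm]
              exact hαl n (β n (ofXm d2 y)) (ofXm d1 (G y))
            · exact hαβ n (ofXm d2 y)
    have hlim0 : Filter.Tendsto (fun n => dist (toXm d2 (α n (ofXm d1 (G y)))) y) (↑U)
        (nhds 0) := by
      apply squeeze_zero (fun n => dist_nonneg) hbound
      have h1 : Filter.Tendsto (fun n => dist (toXm d1 (β n (ofXm d2 y))) (G y)) (↑U)
          (nhds 0) := by
        have := (hG y).dist (tendsto_const_nhds (x := G y) (f := (↑U : Filter ℕ)))
        rwa [dist_self] at this
      have := h1.add (hεU.const_mul 2)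
      rwa [mul_zero, add_zero] at this
    exact dist_eq_zero.1 (tendsto_nhds_unique key hlim0)
  have hFc : Continuous F :=
    (LipschitzWith.of_dist_le_mul (K := 1) (f := F)
      (by intro x y; rw [NNReal.coe_one, one_mul]; exact hFl x y)).continuous
  have hGc : Continuous G :=
    (LipschitzWith.of_dist_le_mul (K := 1) (f := G)
      (by intro x y; rw [NNReal.coe_one, one_mul]; exact hGl x y)).continuous
  let E : Xm d1 ≃ₜ Xm d2 :=
    { toEquiv := ⟨F, G, hGF, hFG⟩
      continuous_toFun := hFc
      continuous_invFun := hGc }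
  refine ⟨(homeoXm d1).trans (E.trans (homeoXm d2).symm), fun x => ?_⟩
  show d2.gauge ((homeoXm d2).symm (E ((homeoXm d1) x))) = d1.gauge x
  have h1 : d2.gauge ((homeoXm d2).symm (E ((homeoXm d1) x))) =
      d2.gauge (F (toXm d1 x)) := rfl
  rw [h1, hFg]
  rfl

end
section Transport

variable {A B C A' B' : Type*} [TopologicalSpace A] [TopologicalSpace B] [TopologicalSpace C]
  [TopologicalSpace A'] [TopologicalSpace B']

lemma gaugedIso_refl (π : A → ℝ) : GaugedIso π π := ⟨Homeomorph.refl A, fun _ => rfl⟩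

lemma gaugedIso_symm {πA : A → ℝ} {πB : B → ℝ} (h : GaugedIso πA πB) : GaugedIso πB πA := by
  obtain ⟨e, he⟩ := h
  exact ⟨e.symm, fun x => by rw [← he (e.symm x), e.apply_symm_apply]⟩

lemma gaugedIso_trans {πA : A → ℝ} {πB : B → ℝ} {πC : C → ℝ}
    (h1 : GaugedIso πA πB) (h2 : GaugedIso πB πC) : GaugedIso πA πC := by
  obtain ⟨e1, he1⟩ := h1
  obtain ⟨e2, he2⟩ := h2
  exact ⟨e1.trans e2, fun x => by rw [Homeomorph.trans_apply, he2, he1]⟩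

lemma homeo_image_sub {πA : A → ℝ} {πB : B → ℝ} (e : A ≃ₜ B)
    (hg : ∀ x, πB (e x) = πA x) (t : ℝ) : e '' sub πA t = sub πB t := by
  ext y
  constructor
  · rintro ⟨x, hx, rfl⟩
    show πB (e x) ≤ t
    rw [hg]
    exact hx
  · intro hy
    refine ⟨e.symm y, ?_, e.apply_symm_apply y⟩
    show πA (e.symm y) ≤ t
    rw [← hg (e.symm y), e.apply_symm_apply]
    exact hy

lemma homeo_image_ccIn (e : A ≃ₜ B) (s : Set A) (x : A) :
    e '' connectedComponentIn s x ⊆ connectedComponentIn (e '' s) (e x) := by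
  by_cases hx : x ∈ s
  · apply IsPreconnected.subset_connectedComponentIn
    · exact isPreconnected_connectedComponentIn.image e e.continuous.continuousOn
    · exact ⟨x, mem_connectedComponentIn hx, rfl⟩
    · exact Set.image_mono (connectedComponentIn_subset s x)
  · rw [connectedComponentIn_eq_empty hx, Set.image_empty]
    exact Set.empty_subset _

lemma shiftMapProp_congr {πA : A → ℝ} {πA' : A' → ℝ} (e : A ≃ₜ A')
    (hg : ∀ x, πA' (e x) = πA x) {ε : ℝ} {σ : A → A} (hσ : ShiftMapProp πA ε σ) :
    ShiftMapProp πA' ε (e ∘ σ ∘ e.symm) := by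
  refine ⟨e.continuous.comp (hσ.1.comp e.symm.continuous), fun x => ?_⟩
  have hgx : πA' x = πA (e.symm x) := by rw [← hg (e.symm x), e.apply_symm_apply]
  constructor
  · show πA' (e (σ (e.symm x))) = πA' x + ε
    rw [hg, (hσ.2 (e.symm x)).1, hgx]
  · show e (σ (e.symm x)) ∈ connectedComponentIn (sub πA' (πA' x + ε)) x
    have hmem := (hσ.2 (e.symm x)).2
    have h1 : e (σ (e.symm x)) ∈ e '' connectedComponentIn
        (sub πA (πA (e.symm x) + ε)) (e.symm x) := ⟨_, hmem, rfl⟩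
    have h2 := homeo_image_ccIn e (sub πA (πA (e.symm x) + ε)) (e.symm x) h1
    rwa [homeo_image_sub e hg, e.apply_symm_apply, ← hgx] at h2

lemma interleaved_congr {πA : A → ℝ} {πB : B → ℝ} {πA' : A' → ℝ} {πB' : B' → ℝ}
    (hA : GaugedIso πA πA') (hB : GaugedIso πB πB') {ε : ℝ}
    (h : Interleaved πA πB ε) : Interleaved πA' πB' ε := by
  obtain ⟨eA, heA⟩ := hA
  obtain ⟨eB, heB⟩ := hB
  obtain ⟨α, β, σ1, σ2, hαc, hβc, hσ1, hσ2, hαg, hβg, hβα, hαβ⟩ := h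
  refine ⟨eB ∘ α ∘ eA.symm, eA ∘ β ∘ eB.symm, eA ∘ σ1 ∘ eA.symm, eB ∘ σ2 ∘ eB.symm,
    eB.continuous.comp (hαc.comp eA.symm.continuous),
    eA.continuous.comp (hβc.comp eB.symm.continuous),
    shiftMapProp_congr eA heA hσ1, shiftMapProp_congr eB heB hσ2, ?_, ?_, ?_, ?_⟩
  · intro x
    show πB' (eB (α (eA.symm x))) = πA' x + ε
    rw [heB, hαg, ← heA (eA.symm x), eA.apply_symm_apply]
  · intro y
    show πA' (eA (β (eB.symm y))) = πB' y + ε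
    rw [heA, hβg, ← heB (eB.symm y), eB.apply_symm_apply]
  · funext x
    show eA (β (eB.symm (eB (α (eA.symm x))))) = eA (σ1 (eA.symm x))
    rw [eB.symm_apply_apply]
    exact congrArg eA (congrFun hβα (eA.symm x))
  · funext y
    show eB (α (eA.symm (eA (β (eB.symm y))))) = eB (σ2 (eB.symm y))
    rw [eA.symm_apply_apply]
    exact congrArg eB (congrFun hαβ (eB.symm y))

lemma interleaved_symm {πA : A → ℝ} {πB : B → ℝ} {ε : ℝ}
    (h : Interleaved πA πB ε) : Interleaved πB πA ε := by
  obtain ⟨α, β, σ1, σ2, hαc, hβc, hσ1, hσ2, hαg, hβg, hβα, hαβ⟩ := h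
  exact ⟨β, α, σ2, σ1, hβc, hαc, hσ2, hσ1, hβg, hαg, hαβ, hβα⟩

lemma comp_shift_key {X Y Z : Type*} [TopologicalSpace X] [TopologicalSpace Y]
    [TopologicalSpace Z] {πX : X → ℝ} {πY : Y → ℝ} {πZ : Z → ℝ} {a b : ℝ}
    (α1 : X → Y) (β1 : Y → X) (α2 : Y → Z) (β2 : Z → Y) (σX : X → X) (σY : Y → Y)
    (ha : 0 ≤ a) (hb : 0 ≤ b)
    (hα1c : Continuous α1) (hβ1c : Continuous β1) (hα2c : Continuous α2)
    (hβ2c : Continuous β2)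
    (hσX : ShiftMapProp πX (2 * a) σX) (hσY : ShiftMapProp πY (2 * b) σY)
    (hα1g : ∀ x, πY (α1 x) = πX x + a) (hβ1g : ∀ y, πX (β1 y) = πY y + a)
    (hβα1 : β1 ∘ α1 = σX) (hβα2 : β2 ∘ α2 = σY) :
    ShiftMapProp πX (2 * (a + b)) ((β1 ∘ β2) ∘ (α2 ∘ α1)) := by
  constructor
  · exact (hβ1c.comp hβ2c).comp (hα2c.comp hα1c)
  · intro x
    have hσYg := fun y => (hσY.2 y).1
    have hgauge : πX (β1 (β2 (α2 (α1 x)))) = πX x + 2 * (a + b) := by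
      have e1 : β2 (α2 (α1 x)) = σY (α1 x) := congrFun hβα2 (α1 x)
      rw [e1, hβ1g, hσYg, hα1g]
      ring
    refine ⟨hgauge, ?_⟩
    have e1 : β2 (α2 (α1 x)) = σY (α1 x) := congrFun hβα2 (α1 x)
    have hmemY : σY (α1 x) ∈ connectedComponentIn (sub πY (πY (α1 x) + 2 * b)) (α1 x) :=
      (hσY.2 (α1 x)).2
    have hα1mem : α1 x ∈ sub πY (πY (α1 x) + 2 * b) := by
      show πY (α1 x) ≤ πY (α1 x) + 2 * b
      linarith
    set S := β1 '' connectedComponentIn (sub πY (πY (α1 x) + 2 * b)) (α1 x) with hS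
    have hSpre : IsPreconnected S :=
      isPreconnected_connectedComponentIn.image β1 hβ1c.continuousOn
    have hSsub : S ⊆ sub πX (πX x + 2 * (a + b)) := by
      rintro _ ⟨z, hz, rfl⟩
      have hzY : z ∈ sub πY (πY (α1 x) + 2 * b) := connectedComponentIn_subset _ _ hz
      have hzY' : πY z ≤ πY (α1 x) + 2 * b := hzY
      show πX (β1 z) ≤ πX x + 2 * (a + b)
      rw [hβ1g]
      have := hα1g x
      linarith
    have hσXmem : σX x ∈ S := by
      refine ⟨α1 x, mem_connectedComponentIn hα1mem, ?_⟩
      exact congrFun hβα1 x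
    have hymem : β1 (β2 (α2 (α1 x))) ∈ S := by
      rw [e1]
      exact ⟨σY (α1 x), hmemY, rfl⟩
    have hmono : sub πX (πX x + 2 * a) ⊆ sub πX (πX x + 2 * (a + b)) := by
      intro z hz
      have hz' : πX z ≤ πX x + 2 * a := hz
      show πX z ≤ πX x + 2 * (a + b)
      linarith
    have hσXin : σX x ∈ connectedComponentIn (sub πX (πX x + 2 * (a + b))) x :=
      connectedComponentIn_mono x hmono ((hσX.2 x).2)
    have hSsub' : S ⊆ connectedComponentIn (sub πX (πX x + 2 * (a + b))) (σX x) :=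
      hSpre.subset_connectedComponentIn hσXmem hSsub
    have heq := connectedComponentIn_eq hσXin
    rw [heq]
    exact hSsub' hymem

lemma interleaved_comp {πA : A → ℝ} {πB : B → ℝ} {πC : C → ℝ} {ε δ : ℝ}
    (hε : 0 ≤ ε) (hδ : 0 ≤ δ)
    (h1 : Interleaved πA πB ε) (h2 : Interleaved πB πC δ) :
    Interleaved πA πC (ε + δ) := by
  obtain ⟨α1, β1, σA, σB, hα1c, hβ1c, hσA, hσB, hα1g, hβ1g, hβα1, hαβ1⟩ := h1
  obtain ⟨α2, β2, σB', σC, hα2c, hβ2c, hσB', hσC, hα2g, hβ2g, hβα2, hαβ2⟩ := h2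
  refine ⟨α2 ∘ α1, β1 ∘ β2, (β1 ∘ β2) ∘ (α2 ∘ α1), (α2 ∘ α1) ∘ (β1 ∘ β2), ?_, ?_, ?_, ?_,
    ?_, ?_, rfl, rfl⟩
  · exact hα2c.comp hα1c
  · exact hβ1c.comp hβ2c
  · exact comp_shift_key (πZ := πC) α1 β1 α2 β2 σA σB' hε hδ hα1c hβ1c hα2c hβ2c hσA hσB' hα1g hβ1g hβα1 hβα2
  · have h := comp_shift_key (πZ := πA) β2 α2 β1 α1 σC σB hδ hε hβ2c hα2c hβ1c hα1c hσC hσB hβ2g hα2g hαβ2 hαβ1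
    rwa [add_comm δ ε] at h
  · intro x
    show πC (α2 (α1 x)) = πA x + (ε + δ)
    rw [hα2g, hα1g]; ring
  · intro y
    show πA (β1 (β2 y)) = πC y + (ε + δ)
    rw [hβ1g, hβ2g]; ring

end Transport
namespace MergeTreeData

variable {d : MergeTreeData}

/-- the point on the root ray at height `h` (clamped) -/
def trunk (d : MergeTreeData) (h : ℝ) : d.Space :=
  Quot.mk d.glueRel ⟨(d.root, max h (d.val d.root)),
    le_max_right _ _, fun hc => absurd rfl hc⟩

lemma continuous_trunk : Continuous (trunk d) := by
  apply continuous_quot_mk.comp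
  exact Continuous.subtype_mk
    (continuous_const.prodMk ((continuous_id.max continuous_const))) _

lemma gauge_trunk (h : ℝ) : d.gauge (trunk d h) = max h (d.val d.root) := rfl

lemma mfun_trunk (x : d.Space) (h : ℝ) :
    mfun d x (trunk d h) = max (d.gauge x) (max h (d.val d.root)) := by
  induction x using Quot.ind with | _ a =>
  show mm a _ = _
  rw [mm]
  rw [if_pos (Or.inl (desc_root a.1.1))]
  rfl

end MergeTreeData

open MergeTreeData in
lemma exists_interleaving (d1 d2 : MergeTreeData) :
    ∃ ε, 0 ≤ ε ∧ Interleaved d1.gauge d2.gauge ε := by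
  set r1 := d1.val d1.root with hr1
  set r2 := d2.val d2.root with hr2
  set m1 := d1.minVal with hm1
  set m2 := d2.minVal with hm2
  set ε := max 0 (max (r2 - m1) (max (r1 - m2) (max ((r1 - m1) / 2) ((r2 - m2) / 2)))) with hε
  have hε0 : 0 ≤ ε := le_max_left _ _
  have hc1 : r2 - m1 ≤ ε := le_trans (le_max_left _ _) (le_max_right _ _)
  have hc2 : r1 - m2 ≤ ε :=
    le_trans (le_trans (le_max_left _ _) (le_max_right _ _)) (le_max_right _ _)
  have hc3 : (r1 - m1) / 2 ≤ ε :=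
    le_trans (le_trans (le_trans (le_max_left _ _) (le_max_right _ _)) (le_max_right _ _))
      (le_max_right _ _)
  have hc4 : (r2 - m2) / 2 ≤ ε :=
    le_trans (le_trans (le_trans (le_max_right _ _) (le_max_right _ _)) (le_max_right _ _))
      (le_max_right _ _)
  have hg1 : ∀ x : d1.Space, m1 ≤ d1.gauge x := minVal_le_gauge
  have hg2 : ∀ y : d2.Space, m2 ≤ d2.gauge y := minVal_le_gauge
  -- the maps
  refine ⟨ε, hε0, fun x => trunk d2 (d1.gauge x + ε), fun y => trunk d1 (d2.gauge y + ε),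
    fun x => trunk d1 (d1.gauge x + ε + ε), fun y => trunk d2 (d2.gauge y + ε + ε),
    continuous_trunk.comp (continuous_gauge.add continuous_const),
    continuous_trunk.comp (continuous_gauge.add continuous_const), ?_, ?_, ?_, ?_, ?_, ?_⟩
  · -- shift map for d1
    constructor
    · exact continuous_trunk.comp ((continuous_gauge.add continuous_const).add continuous_const)
    · intro x
      have hcl : max (d1.gauge x + ε + ε) r1 = d1.gauge x + ε + ε := by
        apply max_eq_left
        have := hg1 x
        linarith
      have hgg : d1.gauge (trunk d1 (d1.gauge x + ε + ε)) = d1.gauge x + 2 * ε := by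
        rw [gauge_trunk, ← hr1, hcl]; ring
      refine ⟨hgg, ?_⟩
      apply mem_comp_of_mfun_le
      · show d1.gauge x ≤ d1.gauge x + 2 * ε
        linarith
      · rw [hgg]
      · rw [mfun_trunk, ← hr1, hcl]
        apply max_le
        · linarith
        · linarith
  · -- shift map for d2
    constructor
    · exact continuous_trunk.comp ((continuous_gauge.add continuous_const).add continuous_const)
    · intro y
      have hcl : max (d2.gauge y + ε + ε) r2 = d2.gauge y + ε + ε := by
        apply max_eq_left
        have := hg2 y
        linarith
      have hgg : d2.gauge (trunk d2 (d2.gauge y + ε + ε)) = d2.gauge y + 2 * ε := by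
        rw [gauge_trunk, ← hr2, hcl]; ring
      refine ⟨hgg, ?_⟩
      apply mem_comp_of_mfun_le
      · show d2.gauge y ≤ d2.gauge y + 2 * ε
        linarith
      · rw [hgg]
      · rw [mfun_trunk, ← hr2, hcl]
        apply max_le
        · linarith
        · linarith
  · intro x
    rw [gauge_trunk, ← hr2]
    apply max_eq_left
    have := hg1 x
    linarith
  · intro y
    rw [gauge_trunk, ← hr1]
    apply max_eq_left
    have := hg2 y
    linarith
  · funext x
    show trunk d1 (d2.gauge (trunk d2 (d1.gauge x + ε)) + ε) = trunk d1 (d1.gauge x + ε + ε)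
    congr 1
    rw [gauge_trunk, ← hr2]
    rw [max_eq_left (by have := hg1 x; linarith)]
  · funext y
    show trunk d2 (d1.gauge (trunk d1 (d2.gauge y + ε)) + ε) = trunk d2 (d2.gauge y + ε + ε)
    congr 1
    rw [gauge_trunk, ← hr1]
    rw [max_eq_left (by have := hg2 y; linarith)]
/-- The interleaving distance is a genuine metric on cellular merge trees up to isomorphism:
it is real-valued (some interleaving exists), symmetric, satisfies the triangle inequality,
and two cellular merge trees at distance zero are isomorphic as gauged spaces. -/
theorem stmt11 {A B C : Type} [TopologicalSpace A] [TopologicalSpace B] [TopologicalSpace C]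
    (πA : A → ℝ) (πB : B → ℝ) (πC : C → ℝ)
    (hA : IsCellularMergeTree πA) (hB : IsCellularMergeTree πB)
    (hC : IsCellularMergeTree πC) :
    {ε : ℝ | 0 ≤ ε ∧ Interleaved πA πB ε}.Nonempty ∧
    dI πA πB = dI πB πA ∧
    dI πA πC ≤ dI πA πB + dI πB πC ∧
    (dI πA πB = 0 → GaugedIso πA πB) := by
  obtain ⟨dA, eA⟩ := hA
  obtain ⟨dB, eB⟩ := hB
  obtain ⟨dC, eC⟩ := hC
  have NAB : {ε : ℝ | 0 ≤ ε ∧ Interleaved πA πB ε}.Nonempty := by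
    obtain ⟨ε, hε0, hI⟩ := exists_interleaving dA dB
    exact ⟨ε, hε0, interleaved_congr eA eB hI⟩
  have NBC : {ε : ℝ | 0 ≤ ε ∧ Interleaved πB πC ε}.Nonempty := by
    obtain ⟨ε, hε0, hI⟩ := exists_interleaving dB dC
    exact ⟨ε, hε0, interleaved_congr eB eC hI⟩
  have bddAB : BddBelow {ε : ℝ | 0 ≤ ε ∧ Interleaved πA πB ε} := ⟨0, fun ε hε => hε.1⟩
  have bddAC : BddBelow {ε : ℝ | 0 ≤ ε ∧ Interleaved πA πC ε} := ⟨0, fun ε hε => hε.1⟩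
  refine ⟨NAB, ?_, ?_, ?_⟩
  · unfold dI
    congr 1
    ext ε
    exact ⟨fun h => ⟨h.1, interleaved_symm h.2⟩, fun h => ⟨h.1, interleaved_symm h.2⟩⟩
  · show sInf {ε : ℝ | 0 ≤ ε ∧ Interleaved πA πC ε} ≤
      sInf {ε : ℝ | 0 ≤ ε ∧ Interleaved πA πB ε} + sInf {ε : ℝ | 0 ≤ ε ∧ Interleaved πB πC ε}
    have hsum : ∀ a ∈ {ε : ℝ | 0 ≤ ε ∧ Interleaved πA πB ε},
        ∀ b ∈ {ε : ℝ | 0 ≤ ε ∧ Interleaved πB πC ε},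
        sInf {ε : ℝ | 0 ≤ ε ∧ Interleaved πA πC ε} ≤ a + b := by
      intro a ha b hb
      exact csInf_le bddAC ⟨add_nonneg ha.1 hb.1, interleaved_comp ha.1 hb.1 ha.2 hb.2⟩
    have h1 : ∀ b ∈ {ε : ℝ | 0 ≤ ε ∧ Interleaved πB πC ε},
        sInf {ε : ℝ | 0 ≤ ε ∧ Interleaved πA πC ε} - b ≤
          sInf {ε : ℝ | 0 ≤ ε ∧ Interleaved πA πB ε} := by
      intro b hb
      apply le_csInf NAB
      intro a ha
      linarith [hsum a ha b hb]
    have h2 : sInf {ε : ℝ | 0 ≤ ε ∧ Interleaved πA πC ε} -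
        sInf {ε : ℝ | 0 ≤ ε ∧ Interleaved πA πB ε} ≤
        sInf {ε : ℝ | 0 ≤ ε ∧ Interleaved πB πC ε} := by
      apply le_csInf NBC
      intro b hb
      linarith [h1 b hb]
    linarith
  · intro h0
    have hseq : ∀ n : ℕ, ∃ ε : ℝ, (0 ≤ ε ∧ Interleaved πA πB ε) ∧ ε < 1 / (n + 1) := by
      intro n
      have hlt : sInf {ε : ℝ | 0 ≤ ε ∧ Interleaved πA πB ε} < 1 / ((n : ℝ) + 1) := by
        rw [show sInf {ε : ℝ | 0 ≤ ε ∧ Interleaved πA πB ε} = dI πA πB from rfl, h0]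
        positivity
      obtain ⟨ε', hmem, hlt'⟩ := exists_lt_of_csInf_lt NAB hlt
      exact ⟨ε', hmem, hlt'⟩
    choose εs hmem hlt using hseq
    have hiso := gaugedIso_of_seq dA dB εs (fun n => (hmem n).1) hlt
      (fun n => interleaved_congr (gaugedIso_symm eA) (gaugedIso_symm eB) (hmem n).2)
    exact gaugedIso_trans (gaugedIso_symm eA) (gaugedIso_trans hiso eB)
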